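/- arXiv:2510.16330 — 2 statements merged into one kernel-verified Lean document; each statement's English description precedes it below -/
import Mathlib

section
/- Let G and H be hypergraphs. Then: (i) |V(G ⊗ H)| = |V(G)| · |V(H)|; (ii) |E(G ⊗ H)| ≤ 2^{r(G)·|V(H)|} · |E(G)|; (iii) for every l ∈ ℕ ∪ {∞}, if there is a linear ordering of V(G) under which every vertex of G has l-outdegree at most d, then there is a linear ordering of V(G ⊗ H) under which every vertex of G ⊗ H has l-outdegree at most |V(H)| · (d + 1). -/
open scoped Classical

noncomputable section

/-- A hypergraph: a finite vertex set and a finite set of hyperedges, with vertices in `ℕ`. -/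
structure NatHypergraph where
  verts : Finset ℕ
  edges : Finset (Finset ℕ)

namespace NatHypergraph

/-- Well-formedness: every hyperedge is a nonempty subset of the vertex set. -/
def Good (G : NatHypergraph) : Prop := ∀ e ∈ G.edges, e ⊆ G.verts ∧ e.Nonempty

/-- The rank of a hypergraph: the maximum arity of a hyperedge. -/
def rank (G : NatHypergraph) : ℕ := G.edges.sup Finset.card

/-- The induced `l`-trimmed subhypergraph of `G` on `S`. -/
def trim (G : NatHypergraph) (S : Finset ℕ) (l : ℕ∞) : NatHypergraph :=
  ⟨G.verts ∩ S,
    (G.edges.filter fun e => ((e \ S).card : ℕ∞) ≤ l ∧ (e ∩ S).Nonempty).image fun e => e ∩ S⟩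

/-- The degree of a vertex: the number of hyperedges containing it. -/
def degree (G : NatHypergraph) (v : ℕ) : ℕ := (G.edges.filter fun e => v ∈ e).card

/-- The `l`-degeneracy of a hypergraph: the least `κ` such that every nonempty induced
`l`-trimmed subhypergraph has a vertex of degree at most `κ`. -/
def degeneracy (G : NatHypergraph) (l : ℕ∞) : ℕ :=
  sInf {κ : ℕ | ∀ S ⊆ G.verts, S.Nonempty → ∃ v ∈ S, (G.trim S l).degree v ≤ κ}

/-- Two vertices are adjacent if some hyperedge contains both. -/
def Adj (G : NatHypergraph) (u v : ℕ) : Prop := ∃ e ∈ G.edges, u ∈ e ∧ v ∈ e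

/-- A hypergraph is connected if any two vertices are joined by a path of adjacencies. -/
def Connected (G : NatHypergraph) : Prop :=
  ∀ u ∈ G.verts, ∀ v ∈ G.verts, Relation.ReflTransGen G.Adj u v

/-- `D` is a connected component of `G`. -/
def IsComponent (G : NatHypergraph) (D : Finset ℕ) : Prop :=
  ∃ v ∈ G.verts, D = G.verts.filter fun u => Relation.ReflTransGen G.Adj v u

/-- The induced subhypergraph (only hyperedges entirely inside `S`). -/
def induce (G : NatHypergraph) (S : Finset ℕ) : NatHypergraph :=
  ⟨G.verts ∩ S, G.edges.filter fun e => e ⊆ S⟩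

end NatHypergraph

/-- `f` is a homomorphism from `H` to `G`. -/
def IsHom (H G : NatHypergraph) (f : ℕ → ℕ) : Prop :=
  (∀ v ∈ H.verts, f v ∈ G.verts) ∧ ∀ e ∈ H.edges, e.image f ∈ G.edges

/-- `Hom(G,H)`: the number of homomorphisms from `H` to `G`
(normalized to be `0` off `V(H)` so that the set is finite). -/
def homCount (G H : NatHypergraph) : ℕ :=
  Set.ncard {f : ℕ → ℕ | IsHom H G f ∧ ∀ v ∉ H.verts, f v = 0}

/-- `Homr(G,H)`: the number of arity-preserving homomorphisms from `H` to `G`. -/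
def homrCount (G H : NatHypergraph) : ℕ :=
  Set.ncard {f : ℕ → ℕ | IsHom H G f ∧ (∀ e ∈ H.edges, (e.image f).card = e.card) ∧
    ∀ v ∉ H.verts, f v = 0}

/-- NatHypergraph isomorphism. -/
def Isomorphic (H H' : NatHypergraph) : Prop :=
  ∃ f : ℕ → ℕ, Set.BijOn f ↑H.verts ↑H'.verts ∧
    H'.edges = H.edges.image fun e => e.image f

/-- The quotient of `H` under the partition of `V(H)` into the fibers of `f`. -/
def quotientBy (H : NatHypergraph) (f : ℕ → ℕ) : NatHypergraph :=
  ⟨H.verts.image f, H.edges.image fun e => e.image f⟩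

/-- `H'` is a quotient of `H` (by some partition of `V(H)`). -/
def IsQuotient (H H' : NatHypergraph) : Prop := ∃ f : ℕ → ℕ, H' = quotientBy H f

/-- Each fiber of `f` induces a connected (trimmed) subhypergraph of `H`. -/
def ContractMap (H : NatHypergraph) (f : ℕ → ℕ) : Prop :=
  ∀ w : ℕ, (H.trim (H.verts.filter fun v => f v = w) ⊤).Connected

/-- `H'` belongs to the contract set `Q^c(H)`: it is a quotient of `H` by a partition
all of whose parts induce connected subhypergraphs of `H`. -/
def IsContractQuotient (H H' : NatHypergraph) : Prop :=
  ∃ f : ℕ → ℕ, ContractMap H f ∧ H' = quotientBy H f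

/-- `α(H')`: the number of partitions `τ` of `V(H)` with connected parts with `H/τ ≅ H'`. -/
def alphaCount (H H' : NatHypergraph) : ℕ :=
  Set.ncard {P : Finset (Finset ℕ) | ∃ f : ℕ → ℕ, ContractMap H f ∧
    Isomorphic (quotientBy H f) H' ∧
    P = (H.verts.image f).image fun w => H.verts.filter fun v => f v = w}

/-- `|Aut(H')|`: the number of automorphisms of `H'`. -/
def autCount (H' : NatHypergraph) : ℕ :=
  Set.ncard {f : ℕ → ℕ | (∀ v ∉ H'.verts, f v = v) ∧ Set.BijOn f ↑H'.verts ↑H'.verts ∧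
    H'.edges.image (fun e => e.image f) = H'.edges}

/-- The arc relation of the `l`-skeleton of the DAH obtained by ordering `G` by `π`. -/
def SkelArc (G : NatHypergraph) (π : ℕ → ℕ) (l : ℕ∞) (u v : ℕ) : Prop :=
  ∃ e ∈ G.edges, u ∈ e ∧ v ∈ e ∧ π u < π v ∧
    ((e.filter fun w => π w < π u).card : ℕ∞) ≤ l

/-- The `l`-outdegree of a vertex in the DAH `(G, π)`. -/
def loutdeg (G : NatHypergraph) (π : ℕ → ℕ) (l : ℕ∞) (u : ℕ) : ℕ :=
  (G.verts.filter fun v => SkelArc G π l u v).card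

/-- Vertices reachable from `v` by a directed path. -/
def Reach (Adj : ℕ → ℕ → Prop) (v : ℕ) : Set ℕ := {u | Relation.ReflTransGen Adj v u}

/-- Vertices reachable from a set `A`. -/
def ReachSet (Adj : ℕ → ℕ → Prop) (A : Set ℕ) : Set ℕ :=
  {u | ∃ a ∈ A, Relation.ReflTransGen Adj a u}

/-- The sources of a DAG: vertices with no incoming arc. -/
def sourcesOf (V : Finset ℕ) (Adj : ℕ → ℕ → Prop) : Finset ℕ :=
  V.filter fun v => ¬ ∃ u ∈ V, Adj u v

/-- `b` lies on the (unique) path between `i` and `j` in `T`. -/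
def OnPath {n : ℕ} (T : SimpleGraph (Fin n)) (i j b : Fin n) : Prop :=
  ∃ p : T.Walk i j, p.IsPath ∧ b ∈ p.support

/-- `(T, β)` is a DAG-tree decomposition of the DAG `(V, Adj)`. -/
def IsDTD (V : Finset ℕ) (Adj : ℕ → ℕ → Prop) {n : ℕ}
    (T : SimpleGraph (Fin n)) (β : Fin n → Finset ℕ) : Prop :=
  T.IsTree ∧ (∀ i, β i ⊆ sourcesOf V Adj) ∧ (∀ s ∈ sourcesOf V Adj, ∃ i, s ∈ β i) ∧
    ∀ i j b, OnPath T i j b →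
      ReachSet Adj ↑(β i) ∩ ReachSet Adj ↑(β j) ⊆ ReachSet Adj ↑(β b)

/-- The DAG-treewidth of the DAG `(V, Adj)`. -/
def dagTreewidth (V : Finset ℕ) (Adj : ℕ → ℕ → Prop) : ℕ :=
  sInf {w : ℕ | ∃ (n : ℕ) (T : SimpleGraph (Fin n)) (β : Fin n → Finset ℕ),
    IsDTD V Adj T β ∧ ∀ i, (β i).card ≤ w}

/-- The `l`-DAG-treewidth of the DAH `(H, π)`. -/
def ldtwOriented (H : NatHypergraph) (π : ℕ → ℕ) (l : ℕ∞) : ℕ :=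
  dagTreewidth H.verts (SkelArc H π l)

/-- The `l`-DAG-treewidth of an undirected hypergraph:
the maximum over all acyclic orientations. -/
def ldtw (H : NatHypergraph) (l : ℕ∞) : ℕ :=
  sSup {w : ℕ | ∃ π : ℕ → ℕ, Set.InjOn π ↑H.verts ∧ w = ldtwOriented H π l}

/-- `f` is a DAH homomorphism from `(K, πK)` to `(G, πG)`. -/
def IsDAHHom (K : NatHypergraph) (πK : ℕ → ℕ) (G : NatHypergraph) (πG : ℕ → ℕ)
    (f : ℕ → ℕ) : Prop :=
  (∀ v ∈ K.verts, f v ∈ G.verts) ∧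
    ∀ e ∈ K.edges, e.image f ∈ G.edges ∧
      ∀ u ∈ e, ∀ v ∈ e, πK u < πK v → πG (f u) < πG (f v)

/-- The number of DAH homomorphisms from `(K, πK)` to `(G, πG)`. -/
def dahHomCount (G : NatHypergraph) (πG : ℕ → ℕ) (K : NatHypergraph) (πK : ℕ → ℕ) : ℕ :=
  Set.ncard {f : ℕ → ℕ | IsDAHHom K πK G πG f ∧ ∀ v ∉ K.verts, f v = 0}

/-- Two orderings of `H` give isomorphic acyclic orientations. -/
def OrientIso (H : NatHypergraph) (π₁ π₂ : ℕ → ℕ) : Prop :=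
  ∃ g : ℕ → ℕ, Set.BijOn g ↑H.verts ↑H.verts ∧
    (H.edges.image fun e => e.image g) = H.edges ∧
    ∀ u ∈ H.verts, ∀ v ∈ H.verts, (π₁ u < π₁ v ↔ π₂ (g u) < π₂ (g v))

/-- The vertices of `H` that are `l`-reachable from the set `S` in the DAH `(H, π)`. -/
def reachClosure (H : NatHypergraph) (π : ℕ → ℕ) (l : ℕ∞) (S : Set ℕ) : Finset ℕ :=
  H.verts.filter fun v => v ∈ ReachSet (SkelArc H π l) S

/-- `H⃗[S]_l`: the sub-DAH induced (0-trimmed) on the vertices `l`-reachable from `S`. -/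
def subDAH (H : NatHypergraph) (π : ℕ → ℕ) (l : ℕ∞) (S : Set ℕ) : NatHypergraph :=
  H.trim (reachClosure H π l S) 0

/-- `B'` is a child of `B` in the tree `T` rooted at `root`. -/
def IsChild {n : ℕ} (T : SimpleGraph (Fin n)) (root B B' : Fin n) : Prop :=
  T.Adj B B' ∧ OnPath T root B' B

/-- `Γ(B)`: the union of the bags in the subtree of `T` rooted at `B`. -/
def GammaSet {n : ℕ} (T : SimpleGraph (Fin n)) (root : Fin n)
    (β : Fin n → Finset ℕ) (B : Fin n) : Set ℕ :=
  {s | ∃ i, OnPath T root i B ∧ s ∈ β i}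

/-- `ext(φ, K⃗, G⃗)` relative to the agreement domain `dom`: the number of DAH homomorphisms
from `(K, πK)` to `(G, πG)` that agree with `φ` on `V(K) ∩ dom`. -/
def extCount (K : NatHypergraph) (πK : ℕ → ℕ) (G : NatHypergraph) (πG : ℕ → ℕ)
    (dom : Set ℕ) (φ : ℕ → ℕ) : ℕ :=
  Set.ncard {ψ : ℕ → ℕ | IsDAHHom K πK G πG ψ ∧ (∀ v ∉ K.verts, ψ v = 0) ∧
    ∀ v ∈ (↑K.verts : Set ℕ) ∩ dom, ψ v = φ v}

/-- The hyperedges `E_i` associated to a core `C` and a component `D`. -/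
def obstructionEdges (H : NatHypergraph) (C D : Finset ℕ) : Finset (Finset ℕ) :=
  H.edges.filter fun e => e ⊆ C ∪ D ∧ 1 < e.card

/-- `H` is an `l`-obstruction (a member of `𝓗_l`). -/
def IsLObstruction (l : ℕ∞) (H : NatHypergraph) : Prop :=
  ∃ k, 3 ≤ k ∧ ∃ C ⊆ H.verts, C.card = k ∧
    (∀ e ∈ (H.trim C l).edges, e.card ≤ 1) ∧
    (∀ D : Finset ℕ, (H.trim (H.verts \ C) ⊤).IsComponent D →
      ¬ C ⊆ (obstructionEdges H C D).biUnion id) ∧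
    ∃ Dmap : ℕ → Finset ℕ, Set.InjOn Dmap ↑C ∧
      ∀ c ∈ C, (H.trim (H.verts \ C) ⊤).IsComponent (Dmap c) ∧
        C.erase c ⊆ (obstructionEdges H C (Dmap c)).biUnion id ∧
        ∀ e ∈ obstructionEdges H C (Dmap c), c ∉ e

/-- `H` is `𝓗_l` ITS free: no induced ∞-trimmed subhypergraph is an `l`-obstruction. -/
def ITSFree (l : ℕ∞) (H : NatHypergraph) : Prop :=
  ∀ S ⊆ H.verts, ¬ IsLObstruction l (H.trim S ⊤)

/-- The hypergraph `(Hv, He)` is an `l`-connector of `X ⊆ Hv`. -/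
def IsConnector (l : ℕ∞) (Hv : Finset ℕ) (He : Finset (Finset ℕ)) (X : Finset ℕ) : Prop :=
  X ⊆ Hv ∧ NatHypergraph.Connected ⟨Hv, He⟩ ∧
    (∀ e ∈ He, 2 ≤ (e ∩ X).card → l < ((e \ X).card : ℕ∞)) ∧
    ∃ V' : Finset ℕ, (NatHypergraph.trim ⟨Hv, He⟩ (Hv \ X) ⊤).IsComponent V' ∧
      ∀ xx ∈ X, ∃ v ∈ V', ∃ e ∈ He, xx ∈ e ∧ v ∈ e

/-- Witness data for membership of `H` in `𝓗_{l,k}`. -/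
def InHlkWitness (l : ℕ∞) (k : ℕ) (H : NatHypergraph)
    (x : ℕ → ℕ) (Vp : ℕ → Finset ℕ) (Ep : ℕ → Finset (Finset ℕ)) : Prop :=
  Set.InjOn x ↑(Finset.range k) ∧
  (∀ i < k, ∀ j < k, i ≠ j → Disjoint (Vp i) (Vp j)) ∧
  (∀ i < k, Disjoint (Vp i) ((Finset.range k).image x)) ∧
  H.verts = (Finset.range k).image x ∪ (Finset.range k).biUnion Vp ∧
  (∀ i < k, ∀ j < k, i ≠ j → Disjoint (Ep i) (Ep j)) ∧
  H.edges = (Finset.range k).biUnion Ep ∧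
  ∀ i < k,
    (∀ e ∈ Ep i, e ⊆ Vp i ∪ (((Finset.range k).image x).erase (x i))) ∧
    IsConnector l (Vp i ∪ (((Finset.range k).image x).erase (x i))) (Ep i)
      (((Finset.range k).image x).erase (x i))

/-- `H ∈ 𝓗_{l,k}`. -/
def InHlk (l : ℕ∞) (k : ℕ) (H : NatHypergraph) : Prop :=
  ∃ x Vp Ep, InHlkWitness l k H x Vp Ep

/-- The DAG `(V, Adj)` contains a `k`-reachable-cycle. -/
def HasReachCycle (V : Finset ℕ) (Adj : ℕ → ℕ → Prop) (k : ℕ) : Prop :=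
  ∃ x y : ZMod k → ℕ, Function.Injective x ∧ Function.Injective y ∧
    (∀ i, x i ∈ V) ∧ (∀ i, y i ∈ V) ∧
    (∀ i, x i ∈ Reach Adj (y i) ∧ x (i + 1) ∈ Reach Adj (y i)) ∧
    ∀ v ∈ V, 2 ≤ (Set.range x ∩ Reach Adj v).ncard →
      ∃ i, Set.range x ∩ Reach Adj v = {x i, x (i + 1)}

/-- `(x, y)` form a `k`-reachable-simplex in the DAG `(V, Adj)`. -/
def IsReachSimplexPair (V : Finset ℕ) (Adj : ℕ → ℕ → Prop) {k : ℕ}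
    (x y : Fin k → ℕ) : Prop :=
  Function.Injective x ∧ Function.Injective y ∧
    (∀ i, x i ∈ V) ∧ (∀ i, y i ∈ V) ∧
    (∀ i j, j ≠ i → x j ∈ Reach Adj (y i)) ∧
    ¬ ∃ v ∈ V, ∀ i, x i ∈ Reach Adj v

/-- The DAG `(V, Adj)` contains a `k`-reachable-simplex. -/
def HasReachSimplex (V : Finset ℕ) (Adj : ℕ → ℕ → Prop) (k : ℕ) : Prop :=
  ∃ x y : Fin k → ℕ, IsReachSimplexPair V Adj x y

/-- `F` is α-acyclic. -/
def IsAlphaAcyclic (F : NatHypergraph) : Prop :=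
  ∃ (n : ℕ) (T : SimpleGraph (Fin n)) (f : Fin n → Finset ℕ),
    T.IsTree ∧ Function.Injective f ∧ (∀ i, f i ∈ F.edges) ∧
    (∀ e ∈ F.edges, ∃ i, f i = e) ∧
    ∀ i j b, OnPath T i j b → f i ∩ f j ⊆ f b

/-- The reachability hypergraph of the DAG `(V, Adj)`. -/
def reachHypergraph (V : Finset ℕ) (Adj : ℕ → ℕ → Prop) : NatHypergraph :=
  ⟨V, (sourcesOf V Adj).image fun s => V.filter fun v => v ∈ Reach Adj s⟩

/-- The clique completion of a hypergraph. -/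
def cliqueCompletion (H : NatHypergraph) : SimpleGraph ℕ where
  Adj u v := u ≠ v ∧ ∃ e ∈ H.edges, u ∈ e ∧ v ∈ e
  symm := by
    constructor
    intro u v h
    obtain ⟨huv, e, he, hu, hv⟩ := h
    exact ⟨huv.symm, e, he, hv, hu⟩
  loopless := by
    constructor
    intro u h
    exact h.1 rfl

/-- `G` has an induced cycle on `n` vertices. -/
def HasInducedCycle (G : SimpleGraph ℕ) (n : ℕ) : Prop :=
  ∃ f : ZMod n → ℕ, Function.Injective f ∧
    ∀ i j : ZMod n, G.Adj (f i) (f j) ↔ (j = i + 1 ∨ i = j + 1)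

/-- The number of colorful homomorphisms from `H` to `G` under the coloring `c`
(with color set `{1, …, |V(H)|}`). -/
def colHomCount (G H : NatHypergraph) (c : ℕ → ℕ) : ℕ :=
  Set.ncard {f : ℕ → ℕ | IsHom H G f ∧ (∀ v ∉ H.verts, f v = 0) ∧
    Set.BijOn (fun v => c (f v)) ↑H.verts ↑(Finset.Icc 1 H.verts.card)}

/-- The tensor product of hypergraphs (vertex pairs encoded by `Nat.pair`). -/
def tensor (G H : NatHypergraph) : NatHypergraph :=
  ⟨(G.verts ×ˢ H.verts).image fun p => Nat.pair p.1 p.2,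
    ((G.verts ×ˢ H.verts).image fun p => Nat.pair p.1 p.2).powerset.filter fun e =>
      (e.image fun m => (Nat.unpair m).1) ∈ G.edges ∧
      (e.image fun m => (Nat.unpair m).2) ∈ H.edges⟩

/-- `Sub(G,H)`: the number of subhypergraphs of `G` isomorphic to `H`. -/
def subCount (G H : NatHypergraph) : ℕ :=
  Set.ncard {p : Finset ℕ × Finset (Finset ℕ) |
    p.1 ⊆ G.verts ∧ (∀ e ∈ p.2, e ∈ G.edges ∧ e ⊆ p.1) ∧ Isomorphic H ⟨p.1, p.2⟩}

/-- Vertex renaming used in the construction of `G^H_l`: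
core vertices go to the matching vertex of the colorful hyperedge `e` of `G`,
vertices of `H'` outside the core go to their fresh copy indexed by `e`, and
vertices outside `H'` go to their unique copy. -/
def liftVert (S X : Finset ℕ) (π c : ℕ → ℕ) (e : Finset ℕ) (v : ℕ) : ℕ :=
  if v ∈ X then Nat.pair 0 ((e.filter fun u => c u = π v).sum id)
  else if v ∈ S then Nat.pair 2 (Nat.pair (Encodable.encode e) v)
  else Nat.pair 1 v

/-- The hypergraph `G^H_l` from the hardness construction. -/
def GHl (H G : NatHypergraph) (S X : Finset ℕ) (Vp : ℕ → Finset ℕ) (π c : ℕ → ℕ)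
    (k : ℕ) : NatHypergraph :=
  ⟨(G.verts.image fun v => Nat.pair 0 v) ∪ ((H.verts \ S).image fun v => Nat.pair 1 v) ∪
      (Finset.range k).biUnion fun i =>
        (G.edges.filter fun e => e.card = k - 1 ∧ e.image c = (Finset.range k).erase i).biUnion
          fun e => (Vp i).image fun v => Nat.pair 2 (Nat.pair (Encodable.encode e) v),
    ((H.edges.filter fun e => e ⊆ H.verts \ S).image fun e => e.image fun v => Nat.pair 1 v) ∪
      (Finset.range k).biUnion fun i =>
        (G.edges.filter fun e => e.card = k - 1 ∧ e.image c = (Finset.range k).erase i).biUnion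
          fun e =>
            (H.edges.filter fun e' => ¬ e' ⊆ H.verts \ S ∧
                e' ⊆ X ∪ Vp i ∪ (H.verts \ S)).image
              fun e' => e'.image (liftVert S X π c e)⟩

/-- The coloring of `G^H_l`. -/
def GHlColor (π c : ℕ → ℕ) (m : ℕ) : ℕ :=
  if (Nat.unpair m).1 = 0 then c (Nat.unpair m).2
  else if (Nat.unpair m).1 = 1 then π (Nat.unpair m).2
  else π (Nat.unpair (Nat.unpair m).2).2

/-- The grouping of the vertices of `G^H_l`: copied vertices first,
then the vertices of `G`, then the vertices of `V^ext`. -/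
def GHlGroup (m : ℕ) : ℕ :=
  if (Nat.unpair m).1 = 2 then 0 else if (Nat.unpair m).1 = 0 then 1 else 2

lemma pairFn_inj : Function.Injective (fun p : ℕ × ℕ => Nat.pair p.1 p.2) := by
  intro p q h
  have h1 := congrArg Nat.unpair h
  simpa [Nat.unpair_pair, Prod.ext_iff] using h1

lemma tensor_verts_mem {G H : NatHypergraph} {m : ℕ} (hm : m ∈ (tensor G H).verts) :
    (Nat.unpair m).1 ∈ G.verts ∧ (Nat.unpair m).2 ∈ H.verts := by
  simp only [tensor, Finset.mem_image, Finset.mem_product] at hm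
  obtain ⟨⟨g, h⟩, ⟨hg, hh⟩, rfl⟩ := hm
  simp [Nat.unpair_pair, hg, hh]

lemma tensor_edge_sub {G H : NatHypergraph} {e : Finset ℕ} (he : e ∈ (tensor G H).edges) :
    e ⊆ (tensor G H).verts ∧
    (e.image fun m => (Nat.unpair m).1) ∈ G.edges ∧
    (e.image fun m => (Nat.unpair m).2) ∈ H.edges := by
  simp only [tensor, Finset.mem_filter, Finset.mem_powerset] at he
  exact ⟨he.1, he.2.1, he.2.2⟩

theorem stmt16 (G H : NatHypergraph) (hG : G.Good) (hH : H.Good) :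
    (tensor G H).verts.card = G.verts.card * H.verts.card ∧
    (tensor G H).edges.card ≤ 2 ^ (G.rank * H.verts.card) * G.edges.card ∧
    ∀ (l : ℕ∞) (d : ℕ) (π : ℕ → ℕ), Set.InjOn π ↑G.verts →
      (∀ v ∈ G.verts, loutdeg G π l v ≤ d) →
      ∃ π' : ℕ → ℕ, Set.InjOn π' ↑(tensor G H).verts ∧
        ∀ v ∈ (tensor G H).verts, loutdeg (tensor G H) π' l v ≤ H.verts.card * (d + 1) := by
  classical
  refine ⟨?_, ?_, ?_⟩
  · show ((G.verts ×ˢ H.verts).image fun p : ℕ × ℕ => Nat.pair p.1 p.2).card = _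
    rw [Finset.card_image_of_injective _ pairFn_inj, Finset.card_product]
  · have hsub : (tensor G H).edges ⊆ G.edges.biUnion fun eg =>
        ((eg ×ˢ H.verts).image fun p : ℕ × ℕ => Nat.pair p.1 p.2).powerset := by
      intro e he
      obtain ⟨hev, heG, _⟩ := tensor_edge_sub he
      refine Finset.mem_biUnion.2 ⟨_, heG, Finset.mem_powerset.2 ?_⟩
      intro m hm
      obtain ⟨hg, hh⟩ := tensor_verts_mem (hev hm)
      refine Finset.mem_image.2 ⟨((Nat.unpair m).1, (Nat.unpair m).2), ?_, ?_⟩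
      · exact Finset.mem_product.2 ⟨Finset.mem_image.2 ⟨m, hm, rfl⟩, hh⟩
      · exact Nat.pair_unpair m
    calc (tensor G H).edges.card
        ≤ (G.edges.biUnion fun eg =>
            ((eg ×ˢ H.verts).image fun p : ℕ × ℕ => Nat.pair p.1 p.2).powerset).card :=
          Finset.card_le_card hsub
      _ ≤ ∑ eg ∈ G.edges,
            (((eg ×ˢ H.verts).image fun p : ℕ × ℕ => Nat.pair p.1 p.2).powerset).card :=
          Finset.card_biUnion_le
      _ ≤ G.edges.card * 2 ^ (G.rank * H.verts.card) := by
          rw [← smul_eq_mul]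
          refine Finset.sum_le_card_nsmul _ _ _ ?_
          intro eg heg
          rw [Finset.card_powerset, Finset.card_image_of_injective _ pairFn_inj,
            Finset.card_product]
          exact Nat.pow_le_pow_right (by norm_num)
            (Nat.mul_le_mul_right _ (Finset.le_sup (f := Finset.card) heg))
      _ = 2 ^ (G.rank * H.verts.card) * G.edges.card := mul_comm _ _
  · intro l d π hπ hd
    set N := H.verts.sup id + 1 with hN
    have hltN : ∀ h ∈ H.verts, h < N := fun h hh =>
      Nat.lt_succ_of_le (Finset.le_sup (f := id) hh)
    have lexlt : ∀ a b c e : ℕ, a < b → c < N → a * N + c < b * N + e := by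
      intro a b c e hab hc
      calc a * N + c < a * N + N := by omega
        _ = (a + 1) * N := by ring
        _ ≤ b * N := Nat.mul_le_mul_right _ hab
        _ ≤ b * N + e := Nat.le_add_right _ _
    have lexle : ∀ a b c e : ℕ, e < N → a * N + c < b * N + e → a ≤ b := by
      intro a b c e he h
      by_contra hab
      push_neg at hab
      exact absurd (lexlt b a e c hab he) (by omega)
    set π' : ℕ → ℕ := fun m => π (Nat.unpair m).1 * N + (Nat.unpair m).2 with hπ'
    refine ⟨π', ?_, ?_⟩
    · intro u hu v hv huv
      obtain ⟨hu1, hu2⟩ := tensor_verts_mem (Finset.mem_coe.1 hu)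
      obtain ⟨hv1, hv2⟩ := tensor_verts_mem (Finset.mem_coe.1 hv)
      simp only [hπ'] at huv
      have h1 : π (Nat.unpair u).1 = π (Nat.unpair v).1 := by
        rcases lt_trichotomy (π (Nat.unpair u).1) (π (Nat.unpair v).1) with h | h | h
        · have := lexlt (π (Nat.unpair u).1) (π (Nat.unpair v).1)
            (Nat.unpair u).2 (Nat.unpair v).2 h (hltN _ hu2)
          omega
        · exact h
        · have := lexlt (π (Nat.unpair v).1) (π (Nat.unpair u).1)
            (Nat.unpair v).2 (Nat.unpair u).2 h (hltN _ hv2)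
          omega
      have h2 : (Nat.unpair u).2 = (Nat.unpair v).2 := by
        rw [h1] at huv; omega
      have h3 : (Nat.unpair u).1 = (Nat.unpair v).1 := hπ hu1 hv1 h1
      have := congrArg (fun p : ℕ × ℕ => Nat.pair p.1 p.2)
        (Prod.ext h3 h2 : Nat.unpair u = Nat.unpair v)
      simpa [Nat.pair_unpair] using this
    · intro u hu
      obtain ⟨hu1, hu2⟩ := tensor_verts_mem hu
      -- key: an arc in the tensor projects to equality or an arc in G
      have key : ∀ v ∈ (tensor G H).verts, SkelArc (tensor G H) π' l u v →
          (Nat.unpair v).1 = (Nat.unpair u).1 ∨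
            SkelArc G π l (Nat.unpair u).1 (Nat.unpair v).1 := by
        intro v hv harc
        obtain ⟨hv1, hv2⟩ := tensor_verts_mem hv
        by_cases hcase : (Nat.unpair v).1 = (Nat.unpair u).1
        · exact Or.inl hcase
        obtain ⟨e, he, hue, hve, hlt, hcard⟩ := harc
        obtain ⟨hev, heG, _⟩ := tensor_edge_sub he
        right
        have hπlt : π (Nat.unpair u).1 < π (Nat.unpair v).1 := by
          have hle : π (Nat.unpair u).1 ≤ π (Nat.unpair v).1 :=
            lexle _ _ _ _ (hltN _ hv2) hlt
          have hne : π (Nat.unpair u).1 ≠ π (Nat.unpair v).1 := fun hcon =>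
            hcase (hπ hv1 hu1 hcon.symm)
          exact lt_of_le_of_ne hle hne
        refine ⟨e.image fun m => (Nat.unpair m).1, heG,
          Finset.mem_image.2 ⟨u, hue, rfl⟩, Finset.mem_image.2 ⟨v, hve, rfl⟩, hπlt, ?_⟩
        refine le_trans ?_ hcard
        have hsub2 : ((e.image fun m => (Nat.unpair m).1).filter
            fun w => π w < π (Nat.unpair u).1) ⊆
            (e.filter fun w => π' w < π' u).image fun m => (Nat.unpair m).1 := by
          intro g hg
          obtain ⟨hg1, hg2⟩ := Finset.mem_filter.1 hg
          obtain ⟨m, hm, rfl⟩ := Finset.mem_image.1 hg1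
          refine Finset.mem_image.2 ⟨m, Finset.mem_filter.2 ⟨hm, ?_⟩, rfl⟩
          obtain ⟨hm1, hm2⟩ := tensor_verts_mem (hev hm)
          exact lexlt _ _ _ _ hg2 (hltN _ hm2)
        exact_mod_cast le_trans (Finset.card_le_card hsub2) Finset.card_image_le
      have hsub3 : ((tensor G H).verts.filter fun v => SkelArc (tensor G H) π' l u v) ⊆
          ((G.verts.filter fun g => g = (Nat.unpair u).1 ∨
              SkelArc G π l (Nat.unpair u).1 g) ×ˢ H.verts).image
            fun p : ℕ × ℕ => Nat.pair p.1 p.2 := by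
        intro v hv
        obtain ⟨hvm, harc⟩ := Finset.mem_filter.1 hv
        obtain ⟨hv1, hv2⟩ := tensor_verts_mem hvm
        refine Finset.mem_image.2 ⟨((Nat.unpair v).1, (Nat.unpair v).2), ?_, Nat.pair_unpair v⟩
        refine Finset.mem_product.2 ⟨Finset.mem_filter.2 ⟨hv1, key v hvm harc⟩, hv2⟩
      have hc1 : (G.verts.filter fun g => g = (Nat.unpair u).1 ∨
          SkelArc G π l (Nat.unpair u).1 g).card ≤ 1 + d := by
        have : (G.verts.filter fun g => g = (Nat.unpair u).1 ∨
            SkelArc G π l (Nat.unpair u).1 g) ⊆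
            (G.verts.filter fun g => g = (Nat.unpair u).1) ∪
              (G.verts.filter fun g => SkelArc G π l (Nat.unpair u).1 g) := by
          intro g hg
          obtain ⟨hgv, hgc⟩ := Finset.mem_filter.1 hg
          rcases hgc with h | h
          · exact Finset.mem_union_left _ (Finset.mem_filter.2 ⟨hgv, h⟩)
          · exact Finset.mem_union_right _ (Finset.mem_filter.2 ⟨hgv, h⟩)
        refine le_trans (Finset.card_le_card this) (le_trans (Finset.card_union_le _ _) ?_)
        have ha : (G.verts.filter fun g => g = (Nat.unpair u).1).card ≤ 1 := by
          refine Finset.card_le_one.2 ?_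
          intro a ha b hb
          rw [(Finset.mem_filter.1 ha).2, (Finset.mem_filter.1 hb).2]
        have hb : (G.verts.filter fun g => SkelArc G π l (Nat.unpair u).1 g).card ≤ d :=
          hd _ hu1
        omega
      show ((tensor G H).verts.filter fun v => SkelArc (tensor G H) π' l u v).card ≤ _
      calc ((tensor G H).verts.filter fun v => SkelArc (tensor G H) π' l u v).card
          ≤ _ := Finset.card_le_card hsub3
        _ ≤ ((G.verts.filter fun g => g = (Nat.unpair u).1 ∨
              SkelArc G π l (Nat.unpair u).1 g) ×ˢ H.verts).card := Finset.card_image_le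
        _ = (G.verts.filter fun g => g = (Nat.unpair u).1 ∨
              SkelArc G π l (Nat.unpair u).1 g).card * H.verts.card := Finset.card_product _ _
        _ ≤ (1 + d) * H.verts.card := Nat.mul_le_mul_right _ hc1
        _ = H.verts.card * (d + 1) := by ring

end
end

section
/- For every hypergraph H there is a function γ: Q(H) → ℚ with γ(H′) ≠ 0 for every H′ ∈ Q(H), such that for every hypergraph G: Sub(G,H) = Σ_{H′ ∈ Q(H)} γ(H′) · Hom(G, H′). -/
open scoped Classical

noncomputable section

namespace Stmt19
open Finset

/-- Functions `S → T` extended by `0`. -/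
def mapsTo (S T : Finset ℕ) : Finset (ℕ → ℕ) :=
  (S.pi fun _ => T).image fun g v => if h : v ∈ S then g v h else 0

lemma mem_mapsTo {S T : Finset ℕ} {f : ℕ → ℕ} :
    f ∈ mapsTo S T ↔ (∀ v ∈ S, f v ∈ T) ∧ ∀ v ∉ S, f v = 0 := by
  constructor
  · rintro hf
    obtain ⟨g, hg, rfl⟩ := Finset.mem_image.mp hf
    constructor
    · intro v hv
      simp only [dif_pos hv]
      exact Finset.mem_pi.mp hg v hv
    · intro v hv; simp [dif_neg hv]
  · rintro ⟨h1, h2⟩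
    refine Finset.mem_image.mpr ⟨fun v _ => f v, ?_, ?_⟩
    · exact Finset.mem_pi.mpr fun v hv => h1 v hv
    · funext v
      by_cases hv : v ∈ S
      · simp [dif_pos hv]
      · simp [dif_neg hv, h2 v hv]

/-- The normalized kernel map of `f` on `S`. -/
def pker (S : Finset ℕ) (f : ℕ → ℕ) : ℕ → ℕ := fun v =>
  if hv : v ∈ S then
    (S.filter fun u => f u = f v).min' ⟨v, Finset.mem_filter.mpr ⟨hv, rfl⟩⟩
  else 0

lemma pker_of_not_mem {S : Finset ℕ} {f : ℕ → ℕ} {v : ℕ} (hv : v ∉ S) : pker S f v = 0 :=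
  dif_neg hv

lemma pker_mem {S : Finset ℕ} (f : ℕ → ℕ) {v : ℕ} (hv : v ∈ S) :
    pker S f v ∈ S ∧ f (pker S f v) = f v := by
  have h := Finset.min'_mem (S.filter fun u => f u = f v)
    ⟨v, Finset.mem_filter.mpr ⟨hv, rfl⟩⟩
  rw [Finset.mem_filter] at h
  simpa [pker, dif_pos hv] using ⟨h.1, h.2⟩

lemma pker_eq_iff {S : Finset ℕ} (f : ℕ → ℕ) {u v : ℕ} (hu : u ∈ S) (hv : v ∈ S) :
    pker S f u = pker S f v ↔ f u = f v := by
  constructor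
  · intro h
    have h1 := (pker_mem f hu).2
    have h2 := (pker_mem f hv).2
    rw [← h1, ← h2, h]
  · intro h
    simp only [pker, dif_pos hu, dif_pos hv]
    congr 1
    ext w
    simp [h]

lemma pker_congr {S : Finset ℕ} {f g : ℕ → ℕ} {v : ℕ} (hv : v ∈ S)
    (h : ∀ u ∈ S, (g u = g v ↔ f u = f v)) : pker S g v = pker S f v := by
  simp only [pker, dif_pos hv]
  congr 1
  ext w
  simp only [Finset.mem_filter, and_congr_right_iff]
  exact fun hw => h w hw

lemma pker_pker (S : Finset ℕ) (f : ℕ → ℕ) : pker S (pker S f) = pker S f := by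
  funext v
  by_cases hv : v ∈ S
  · have h1 : pker S (pker S f) v = pker S f v := by
      refine pker_congr hv fun u hu => pker_eq_iff f hu hv
    exact h1
  · simp [pker, dif_neg hv]


/-- The finset of normalized partitions (representative maps) of `S`. -/
def Parts (S : Finset ℕ) : Finset (ℕ → ℕ) :=
  (mapsTo S S).filter fun q => pker S q = q

lemma pker_mem_Parts (S : Finset ℕ) (f : ℕ → ℕ) : pker S f ∈ Parts S := by
  refine Finset.mem_filter.mpr ⟨mem_mapsTo.mpr ⟨?_, ?_⟩, pker_pker S f⟩
  · exact fun v hv => (pker_mem f hv).1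
  · exact fun v hv => pker_of_not_mem hv

lemma Parts_idem {S : Finset ℕ} {q : ℕ → ℕ} (hq : q ∈ Parts S) {v : ℕ} (hv : v ∈ S) :
    q (q v) = q v := by
  have h := (Finset.mem_filter.mp hq).2
  have h2 := (pker_mem q hv).2
  rw [h] at h2
  exact h2

lemma Parts_mem {S : Finset ℕ} {q : ℕ → ℕ} (hq : q ∈ Parts S) {v : ℕ} (hv : v ∈ S) :
    q v ∈ S := by
  exact (mem_mapsTo.mp (Finset.mem_filter.mp hq).1).1 v hv

lemma Parts_zero {S : Finset ℕ} {q : ℕ → ℕ} (hq : q ∈ Parts S) {v : ℕ} (hv : v ∉ S) :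
    q v = 0 := by
  exact (mem_mapsTo.mp (Finset.mem_filter.mp hq).1).2 v hv

lemma Parts_min {S : Finset ℕ} {q : ℕ → ℕ} (hq : q ∈ Parts S) {u v : ℕ} (hu : u ∈ S)
    (hv : v ∈ S) (huv : q u = q v) : q v ≤ u := by
  have h := (Finset.mem_filter.mp hq).2
  have h2 : pker S q v ≤ u := by
    simp only [pker, dif_pos hv]
    refine Finset.min'_le _ u ?_
    rw [Finset.mem_filter]
    exact ⟨hu, huv⟩
  rw [h] at h2
  exact h2

/-- `q'` is refined by `q` on `S`. -/
def Refines (S : Finset ℕ) (q q' : ℕ → ℕ) : Prop :=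
  ∀ u ∈ S, ∀ v ∈ S, q u = q v → q' u = q' v

/-- Block weight. -/
def pw (n : ℕ) : ℚ := (-1 : ℚ) ^ (n - 1) * (Nat.factorial (n - 1) : ℚ)

/-- Partition coefficient: product of block weights. -/
def pc (S : Finset ℕ) (q : ℕ → ℕ) : ℚ :=
  ∏ w ∈ S.image q, pw ((S.filter fun v => q v = w).card)

/-- The discrete partition predicate. -/
def Disc (S : Finset ℕ) (q' : ℕ → ℕ) : Prop := ∀ u ∈ S, ∀ v ∈ S, q' u = q' v → u = v


lemma min'_eq_of_eq {s t : Finset ℕ} (h : s = t) (hs : s.Nonempty) (ht : t.Nonempty) :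
    s.min' hs = t.min' ht := by subst h; rfl

/-- Restriction of a map to `T` (zero outside). -/
def cut (T : Finset ℕ) (q : ℕ → ℕ) : ℕ → ℕ := fun v => if v ∈ T then q v else 0

lemma cut_pos {T : Finset ℕ} (q : ℕ → ℕ) {v : ℕ} (hv : v ∈ T) : cut T q v = q v :=
  if_pos hv

lemma cut_neg {T : Finset ℕ} (q : ℕ → ℕ) {v : ℕ} (hv : v ∉ T) : cut T q v = 0 :=
  if_neg hv

section Fiber

variable {S : Finset ℕ} {q : ℕ → ℕ} {x : ℕ}

lemma fiber_facts (hq : q ∈ Parts S) (hx : x ∈ S)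
    (B : Finset ℕ) (hfib : S.filter (fun v => q v = q x) = B) :
    (∀ v, v ∈ B ↔ v ∈ S ∧ q v = q x) ∧ q x ∈ B := by
  have h1 : ∀ v, v ∈ B ↔ v ∈ S ∧ q v = q x := by
    intro v; rw [← hfib, Finset.mem_filter]
  exact ⟨h1, (h1 (q x)).mpr ⟨Parts_mem hq hx, Parts_idem hq hx⟩⟩

lemma cut_mem_Parts (hq : q ∈ Parts S) (hx : x ∈ S)
    {B : Finset ℕ} (hfib : S.filter (fun v => q v = q x) = B) :
    cut (S \ B) q ∈ Parts (S \ B) := by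
  obtain ⟨hB, hqxB⟩ := fiber_facts hq hx B hfib
  have hnotB : ∀ v ∈ S \ B, q v ∉ B := by
    intro v hv
    rw [Finset.mem_sdiff] at hv
    intro hmem
    have := ((hB (q v)).mp hmem).2
    rw [Parts_idem hq hv.1] at this
    exact hv.2 ((hB v).mpr ⟨hv.1, this⟩)
  have hmem : ∀ v ∈ S \ B, cut (S \ B) q v ∈ S \ B := by
    intro v hv
    have hv' := Finset.mem_sdiff.mp hv
    have : q v ∈ S := Parts_mem hq hv'.1
    simp only [cut, if_pos hv]
    exact Finset.mem_sdiff.mpr ⟨this, hnotB v hv⟩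
  -- fibers inside S \ B coincide with fibers in S
  have hfibeq : ∀ v ∈ S \ B,
      (S \ B).filter (fun u => cut (S \ B) q u = cut (S \ B) q v)
        = S.filter (fun u => q u = q v) := by
    intro v hv
    have hv' := Finset.mem_sdiff.mp hv
    ext u
    simp only [Finset.mem_filter]
    constructor
    · rintro ⟨hu', h2⟩
      rw [cut_pos q hu', cut_pos q hv] at h2
      exact ⟨(Finset.mem_sdiff.mp hu').1, h2⟩
    · rintro ⟨hu, h2⟩
      have hunB : u ∉ B := by
        intro hmem
        have h3 := ((hB u).mp hmem).2
        rw [h2] at h3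
        have hqvx : q v = q x := by rw [← Parts_idem hq hv'.1, h3, Parts_idem hq hx]
        exact hv'.2 ((hB v).mpr ⟨hv'.1, hqvx⟩)
      have hu' : u ∈ S \ B := Finset.mem_sdiff.mpr ⟨hu, hunB⟩
      refine ⟨hu', ?_⟩
      rw [cut_pos q hu', cut_pos q hv]
      exact h2
  refine Finset.mem_filter.mpr ⟨mem_mapsTo.mpr ⟨hmem, fun v hv => if_neg hv⟩, ?_⟩
  funext v
  by_cases hv : v ∈ S \ B
  · have hv' := Finset.mem_sdiff.mp hv
    have hne1 : ((S \ B).filter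
        (fun u => cut (S \ B) q u = cut (S \ B) q v)).Nonempty := by
      refine ⟨v, Finset.mem_filter.mpr ⟨hv, rfl⟩⟩
    have hne2 : (S.filter (fun u => q u = q v)).Nonempty :=
      ⟨v, Finset.mem_filter.mpr ⟨hv'.1, rfl⟩⟩
    have : pker (S \ B) (cut (S \ B) q) v
        = (S.filter (fun u => q u = q v)).min' hne2 := by
      rw [pker, dif_pos hv]
      exact min'_eq_of_eq (hfibeq v hv) _ hne2
    rw [this]
    have hq' := (Finset.mem_filter.mp hq).2
    have : pker S q v = (S.filter (fun u => q u = q v)).min' hne2 := by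
      rw [pker, dif_pos hv'.1]
    rw [cut_pos q hv, ← this, hq']
  · rw [pker_of_not_mem hv, cut, if_neg hv]

end Fiber

section Fiber2

variable {S : Finset ℕ} {q : ℕ → ℕ} {x : ℕ}

lemma pc_cut (hq : q ∈ Parts S) (hx : x ∈ S)
    {B : Finset ℕ} (hfib : S.filter (fun v => q v = q x) = B) :
    pc S q = pw B.card * pc (S \ B) (cut (S \ B) q) := by
  obtain ⟨hB, hqxB⟩ := fiber_facts hq hx B hfib
  have hnotB : ∀ v ∈ S \ B, q v ≠ q x := by
    intro v hv hne
    have hv' := Finset.mem_sdiff.mp hv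
    exact hv'.2 ((hB v).mpr ⟨hv'.1, hne⟩)
  -- image decomposition
  have himage : S.image q = insert (q x) ((S \ B).image q) := by
    ext w
    simp only [Finset.mem_image, Finset.mem_insert]
    constructor
    · rintro ⟨v, hv, rfl⟩
      by_cases hvB : v ∈ B
      · exact Or.inl ((hB v).mp hvB).2
      · exact Or.inr ⟨v, Finset.mem_sdiff.mpr ⟨hv, hvB⟩, rfl⟩
    · rintro (rfl | ⟨v, hv, rfl⟩)
      · exact ⟨x, hx, rfl⟩
      · exact ⟨v, (Finset.mem_sdiff.mp hv).1, rfl⟩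
  have hnotmem : q x ∉ (S \ B).image q := by
    rw [Finset.mem_image]
    rintro ⟨v, hv, hvq⟩
    exact hnotB v hv hvq
  -- the fibers of non-x blocks agree
  have hfibeq : ∀ w ∈ (S \ B).image q,
      S.filter (fun v => q v = w) = (S \ B).filter (fun v => cut (S \ B) q v = w) := by
    intro w hw
    obtain ⟨v0, hv0, rfl⟩ := Finset.mem_image.mp hw
    ext u
    simp only [Finset.mem_filter]
    constructor
    · rintro ⟨hu, h2⟩
      have hunB : u ∉ B := by
        intro hmem
        exact hnotB v0 hv0 (by rw [← h2, ((hB u).mp hmem).2])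
      have hu' : u ∈ S \ B := Finset.mem_sdiff.mpr ⟨hu, hunB⟩
      exact ⟨hu', by rw [cut_pos q hu']; exact h2⟩
    · rintro ⟨hu', h2⟩
      rw [cut_pos q hu'] at h2
      exact ⟨(Finset.mem_sdiff.mp hu').1, h2⟩
  have himg2 : (S \ B).image q = (S \ B).image (cut (S \ B) q) :=
    Finset.image_congr fun v hv => (cut_pos q hv).symm
  rw [pc, himage, Finset.prod_insert hnotmem]
  congr 1
  · congr 1
    rw [hfib]
  · rw [pc, ← himg2]
    refine Finset.prod_congr rfl fun w hw => ?_
    rw [hfibeq w hw]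

lemma cut_refines {q' : ℕ → ℕ} (h : Refines S q q') (B : Finset ℕ) :
    Refines (S \ B) (cut (S \ B) q) q' := by
  intro u hu v hv h2
  rw [cut_pos q hu, cut_pos q hv] at h2
  exact h u (Finset.mem_sdiff.mp hu).1 v (Finset.mem_sdiff.mp hv).1 h2
end Fiber2


/-- Glue a block `B` (with representative `m`) onto a partition of the rest. -/
def glue (B : Finset ℕ) (m : ℕ) (r : ℕ → ℕ) : ℕ → ℕ := fun v => if v ∈ B then m else r v

section Glue

variable {S B : Finset ℕ} {r : ℕ → ℕ} {x : ℕ}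

lemma glue_facts (hxB : x ∈ B) (hBS : B ⊆ S) (hr : r ∈ Parts (S \ B)) :
    glue B (B.min' ⟨x, hxB⟩) r ∈ Parts S ∧
    S.filter (fun v => glue B (B.min' ⟨x, hxB⟩) r v = glue B (B.min' ⟨x, hxB⟩) r x) = B ∧
    cut (S \ B) (glue B (B.min' ⟨x, hxB⟩) r) = r := by
  set m := B.min' ⟨x, hxB⟩ with hm
  have hmB : m ∈ B := Finset.min'_mem _ _
  have hmS : m ∈ S := hBS hmB
  have hgB : ∀ v ∈ B, glue B m r v = m := fun v hv => if_pos hv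
  have hgnB : ∀ v, v ∉ B → glue B m r v = r v := fun v hv => if_neg hv
  have hrange : ∀ v ∈ S \ B, r v ∈ S \ B := fun v hv => Parts_mem hr hv
  have hvalne : ∀ v ∈ S \ B, glue B m r v ≠ m := by
    intro v hv hne
    rw [hgnB v (Finset.mem_sdiff.mp hv).2] at hne
    have := hrange v hv
    rw [hne] at this
    exact (Finset.mem_sdiff.mp this).2 hmB
  -- the fiber of any b ∈ B is B
  have hfibB : ∀ b ∈ B, S.filter (fun v => glue B m r v = glue B m r b) = B := by
    intro b hb
    ext u
    simp only [Finset.mem_filter]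
    rw [hgB b hb]
    constructor
    · rintro ⟨hu, h2⟩
      by_contra hunB
      exact hvalne u (Finset.mem_sdiff.mpr ⟨hu, hunB⟩) h2
    · intro hu
      exact ⟨hBS hu, hgB u hu⟩
  -- the fiber of v ∉ B equals the r-fiber
  have hfibnB : ∀ v ∈ S \ B,
      S.filter (fun u => glue B m r u = glue B m r v)
        = (S \ B).filter (fun u => r u = r v) := by
    intro v hv
    have hv' := Finset.mem_sdiff.mp hv
    ext u
    simp only [Finset.mem_filter]
    rw [hgnB v hv'.2]
    constructor
    · rintro ⟨hu, h2⟩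
      have hunB : u ∉ B := by
        intro huB
        rw [hgB u huB] at h2
        exact hvalne v hv (by rw [hgnB v hv'.2]; exact h2.symm)
      rw [hgnB u hunB] at h2
      exact ⟨Finset.mem_sdiff.mpr ⟨hu, hunB⟩, h2⟩
    · rintro ⟨hu, h2⟩
      have hu' := Finset.mem_sdiff.mp hu
      rw [hgnB u hu'.2]
      exact ⟨hu'.1, h2⟩
  have hcut : cut (S \ B) (glue B m r) = r := by
    funext v
    by_cases hv : v ∈ S \ B
    · rw [cut_pos _ hv, hgnB v (Finset.mem_sdiff.mp hv).2]
    · rw [cut_neg _ hv, Parts_zero hr hv]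
  have hParts : glue B m r ∈ Parts S := by
    refine Finset.mem_filter.mpr ⟨mem_mapsTo.mpr ⟨?_, ?_⟩, ?_⟩
    · intro v hv
      by_cases hvB : v ∈ B
      · rw [hgB v hvB]; exact hmS
      · rw [hgnB v hvB]
        exact (Finset.mem_sdiff.mp (hrange v (Finset.mem_sdiff.mpr ⟨hv, hvB⟩))).1
    · intro v hv
      have hvB : v ∉ B := fun h => hv (hBS h)
      rw [hgnB v hvB]
      exact Parts_zero hr (by rw [Finset.mem_sdiff]; exact fun h => hv h.1)
    · funext v
      by_cases hv : v ∈ S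
      · have hne : (S.filter fun u => glue B m r u = glue B m r v).Nonempty :=
          ⟨v, Finset.mem_filter.mpr ⟨hv, rfl⟩⟩
        have hpk : pker S (glue B m r) v
            = (S.filter fun u => glue B m r u = glue B m r v).min' hne := by
          rw [pker, dif_pos hv]
        by_cases hvB : v ∈ B
        · rw [hpk, min'_eq_of_eq (hfibB v hvB) hne ⟨x, hxB⟩, hgB v hvB]
        · have hv' : v ∈ S \ B := Finset.mem_sdiff.mpr ⟨hv, hvB⟩
          have hner : ((S \ B).filter fun u => r u = r v).Nonempty :=
            ⟨v, Finset.mem_filter.mpr ⟨hv', rfl⟩⟩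
          rw [hpk, min'_eq_of_eq (hfibnB v hv') hne hner, hgnB v hvB]
          have h3 := (Finset.mem_filter.mp hr).2
          conv_rhs => rw [← h3]
          rw [pker, dif_pos hv']
      · rw [pker_of_not_mem hv]
        have hvB : v ∉ B := fun h => hv (hBS h)
        rw [hgnB v hvB]
        exact (Parts_zero hr (by rw [Finset.mem_sdiff]; exact fun h => hv h.1)).symm
  exact ⟨hParts, hfibB x hxB, hcut⟩

end Glue


lemma glue_refines {S B : Finset ℕ} {r q' : ℕ → ℕ} {m x : ℕ} (hxB : x ∈ B) (hBS : B ⊆ S)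
    (hBA : ∀ v ∈ B, q' v = q' x) (hrR : Refines (S \ B) r q')
    (hr : r ∈ Parts (S \ B)) (hmB : m ∈ B) :
    Refines S (glue B m r) q' := by
  intro u hu v hv h2
  by_cases huB : u ∈ B <;> by_cases hvB : v ∈ B
  · rw [hBA u huB, hBA v hvB]
  · exfalso
    rw [show glue B m r u = m from if_pos huB, show glue B m r v = r v from if_neg hvB] at h2
    have := Parts_mem hr (Finset.mem_sdiff.mpr ⟨hv, hvB⟩)
    rw [← h2] at this
    exact (Finset.mem_sdiff.mp this).2 hmB
  · exfalso
    rw [show glue B m r v = m from if_pos hvB, show glue B m r u = r u from if_neg huB] at h2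
    have := Parts_mem hr (Finset.mem_sdiff.mpr ⟨hu, huB⟩)
    rw [h2] at this
    exact (Finset.mem_sdiff.mp this).2 hmB
  · rw [show glue B m r u = r u from if_neg huB, show glue B m r v = r v from if_neg hvB] at h2
    exact hrR u (Finset.mem_sdiff.mpr ⟨hu, huB⟩) v (Finset.mem_sdiff.mpr ⟨hv, hvB⟩) h2

lemma disc_mono {S T : Finset ℕ} {q' : ℕ → ℕ} (h : T ⊆ S) (hd : Disc S q') : Disc T q' :=
  fun u hu v hv h2 => hd u (h hu) v (h hv) h2

lemma disc_sdiff_iff {S A B : Finset ℕ} {q' : ℕ → ℕ} {x : ℕ} (hx : x ∈ S)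
    (hA : ∀ v, v ∈ A ↔ v ∈ S ∧ q' v = q' x) (hxB : x ∈ B) (hBA : B ⊆ A) :
    Disc (S \ B) q' ↔ Disc (S \ A) q' ∧ (A \ B).card ≤ 1 := by
  have hAS : A ⊆ S := fun v hv => ((hA v).mp hv).1
  constructor
  · intro hd
    refine ⟨disc_mono (Finset.sdiff_subset_sdiff le_rfl hBA) hd, ?_⟩
    rw [Finset.card_le_one]
    intro u hu v hv
    have hu' := Finset.mem_sdiff.mp hu
    have hv' := Finset.mem_sdiff.mp hv
    refine hd u (Finset.mem_sdiff.mpr ⟨hAS hu'.1, hu'.2⟩)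
      v (Finset.mem_sdiff.mpr ⟨hAS hv'.1, hv'.2⟩) ?_
    rw [((hA u).mp hu'.1).2, ((hA v).mp hv'.1).2]
  · rintro ⟨hd, hcard⟩
    intro u hu v hv h2
    have hu' := Finset.mem_sdiff.mp hu
    have hv' := Finset.mem_sdiff.mp hv
    by_cases huA : u ∈ A <;> by_cases hvA : v ∈ A
    · rw [Finset.card_le_one] at hcard
      exact hcard u (Finset.mem_sdiff.mpr ⟨huA, hu'.2⟩) v (Finset.mem_sdiff.mpr ⟨hvA, hv'.2⟩)
    · exfalso
      exact hvA ((hA v).mpr ⟨hv'.1, by rw [← h2, ((hA u).mp huA).2]⟩)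
    · exfalso
      exact huA ((hA u).mpr ⟨hu'.1, by rw [h2, ((hA v).mp hvA).2]⟩)
    · exact hd u (Finset.mem_sdiff.mpr ⟨hu'.1, huA⟩) v (Finset.mem_sdiff.mpr ⟨hv'.1, hvA⟩) h2

lemma disc_iff {S A : Finset ℕ} {q' : ℕ → ℕ} {x : ℕ} (hx : x ∈ S)
    (hA : ∀ v, v ∈ A ↔ v ∈ S ∧ q' v = q' x) :
    Disc S q' ↔ Disc (S \ A) q' ∧ A = {x} := by
  have hxA : x ∈ A := (hA x).mpr ⟨hx, rfl⟩
  constructor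
  · intro hd
    refine ⟨disc_mono (Finset.sdiff_subset) hd, ?_⟩
    ext u
    rw [Finset.mem_singleton]
    constructor
    · intro hu
      exact hd u ((hA u).mp hu).1 x hx ((hA u).mp hu).2
    · rintro rfl; exact hxA
  · rintro ⟨hd, hAx⟩
    intro u hu v hv h2
    by_cases huA : q' u = q' x
    · have h1 : u ∈ A := (hA u).mpr ⟨hu, huA⟩
      have h2' : v ∈ A := (hA v).mpr ⟨hv, by rw [← h2]; exact huA⟩
      rw [hAx, Finset.mem_singleton] at h1 h2'
      rw [h1, h2']
    · have h1 : u ∈ S \ A := Finset.mem_sdiff.mpr ⟨hu, fun h => huA ((hA u).mp h).2⟩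
      have h2' : v ∈ S \ A := Finset.mem_sdiff.mpr
        ⟨hv, fun h => huA (by rw [h2]; exact ((hA v).mp h).2)⟩
      exact hd u h1 v h2' h2


lemma pw_one : pw 1 = 1 := by simp [pw, Nat.factorial]

lemma pw_sum (b : ℕ) : pw (b + 2) + ((b : ℚ) + 1) * pw (b + 1) = 0 := by
  have h1 : pw (b + 2) = (-1 : ℚ) ^ (b + 1) * (Nat.factorial (b + 1) : ℚ) := rfl
  have h2 : pw (b + 1) = (-1 : ℚ) ^ b * (Nat.factorial b : ℚ) := rfl
  rw [h1, h2, Nat.factorial_succ]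
  push_cast
  ring

theorem main_id (S : Finset ℕ) (q' : ℕ → ℕ) :
    (∑ q ∈ (Parts S).filter fun q => Refines S q q', pc S q)
      = if Disc S q' then 1 else 0 := by
  induction S using Finset.strongInduction with
  | _ S IH =>
  rcases Finset.eq_empty_or_nonempty S with rfl | ⟨x, hx⟩
  · have h0 : (Parts ∅).filter (fun q => Refines ∅ q q') = {fun _ => (0 : ℕ)} := by
      ext f
      simp only [Finset.mem_filter, Finset.mem_singleton]
      constructor
      · rintro ⟨hf, _⟩
        have := (mem_mapsTo.mp (Finset.mem_filter.mp hf).1).2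
        funext v
        exact this v (Finset.notMem_empty v)
      · rintro rfl
        refine ⟨Finset.mem_filter.mpr ⟨mem_mapsTo.mpr ⟨?_, ?_⟩, ?_⟩, ?_⟩
        · exact fun v hv => absurd hv (Finset.notMem_empty v)
        · exact fun v _ => rfl
        · funext v
          exact pker_of_not_mem (Finset.notMem_empty v)
        · exact fun u hu => absurd hu (Finset.notMem_empty u)
    have hdisc0 : Disc ∅ q' := fun u hu => absurd hu (Finset.notMem_empty u)
    rw [h0, Finset.sum_singleton, if_pos hdisc0]
    simp [pc]
  · set A := S.filter (fun v => q' v = q' x) with hAdef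
    have hA : ∀ v, v ∈ A ↔ v ∈ S ∧ q' v = q' x := by
      intro v; rw [hAdef, Finset.mem_filter]
    have hxA : x ∈ A := (hA x).mpr ⟨hx, rfl⟩
    have hAS : A ⊆ S := fun v hv => ((hA v).mp hv).1
    set Bb := (A.powerset.filter fun B => x ∈ B) with hBb
    have hBbmem : ∀ B, B ∈ Bb ↔ B ⊆ A ∧ x ∈ B := by
      intro B; rw [hBb, Finset.mem_filter, Finset.mem_powerset]
    have hmaps : ∀ q ∈ (Parts S).filter (fun q => Refines S q q'),
        S.filter (fun v => q v = q x) ∈ Bb := by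
      intro q hq
      obtain ⟨hqP, hqR⟩ := Finset.mem_filter.mp hq
      refine (hBbmem _).mpr ⟨?_, Finset.mem_filter.mpr ⟨hx, rfl⟩⟩
      intro v hv
      obtain ⟨hvS, hqv⟩ := Finset.mem_filter.mp hv
      exact (hA v).mpr ⟨hvS, hqR v hvS x hx hqv⟩
    rw [← Finset.sum_fiberwise_of_maps_to hmaps]
    have hstep2 : ∀ B ∈ Bb,
        (∑ q ∈ ((Parts S).filter fun q => Refines S q q').filter
            (fun q => S.filter (fun v => q v = q x) = B), pc S q)
          = pw B.card * (if Disc (S \ B) q' then 1 else 0) := by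
      intro B hB
      obtain ⟨hBA, hxB⟩ := (hBbmem B).mp hB
      have hBS : B ⊆ S := hBA.trans hAS
      have hssub : S \ B ⊂ S := Finset.sdiff_ssubset hBS ⟨x, hxB⟩
      rw [← IH (S \ B) hssub, Finset.mul_sum]
      refine Finset.sum_bij' (fun q _ => cut (S \ B) q)
        (fun r _ => glue B (B.min' ⟨x, hxB⟩) r) ?_ ?_ ?_ ?_ ?_
      · intro q hq
        obtain ⟨hq1, hfib⟩ := Finset.mem_filter.mp hq
        obtain ⟨hqP, hqR⟩ := Finset.mem_filter.mp hq1
        exact Finset.mem_filter.mpr ⟨cut_mem_Parts hqP hx hfib, cut_refines hqR B⟩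
      · intro r hr
        obtain ⟨hrP, hrR⟩ := Finset.mem_filter.mp hr
        obtain ⟨hgP, hgfib, hgcut⟩ := glue_facts hxB hBS hrP
        refine Finset.mem_filter.mpr ⟨Finset.mem_filter.mpr ⟨hgP, ?_⟩, hgfib⟩
        exact glue_refines hxB hBS (fun v hv => ((hA v).mp (hBA hv)).2) hrR hrP
          (Finset.min'_mem _ _)
      · -- left inverse : glue (cut q) = q
        intro q hq
        obtain ⟨hq1, hfib⟩ := Finset.mem_filter.mp hq
        obtain ⟨hqP, hqR⟩ := Finset.mem_filter.mp hq1
        obtain ⟨hBmem, hqxB⟩ := fiber_facts hqP hx B hfib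
        have hqxmin : q x = B.min' ⟨x, hxB⟩ := by
          refine le_antisymm ?_ (Finset.min'_le _ _ hqxB)
          refine Finset.le_min' _ _ _ fun u hu => ?_
          obtain ⟨huS, hqu⟩ := (hBmem u).mp hu
          exact Parts_min hqP huS hx hqu
        change glue B (B.min' ⟨x, hxB⟩) (cut (S \ B) q) = q
        funext v
        by_cases hvB : v ∈ B
        · rw [show glue B (B.min' ⟨x, hxB⟩) (cut (S \ B) q) v = B.min' ⟨x, hxB⟩
            from if_pos hvB, ← hqxmin]
          exact (((hBmem v).mp hvB).2).symm
        · rw [show glue B (B.min' ⟨x, hxB⟩) (cut (S \ B) q) v = cut (S \ B) q v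
            from if_neg hvB]
          by_cases hvS : v ∈ S
          · exact cut_pos q (Finset.mem_sdiff.mpr ⟨hvS, hvB⟩)
          · rw [cut_neg q (fun h => hvS (Finset.mem_sdiff.mp h).1)]
            exact (Parts_zero hqP hvS).symm
      · -- right inverse : cut (glue r) = r
        intro r hr
        obtain ⟨hrP, hrR⟩ := Finset.mem_filter.mp hr
        change cut (S \ B) (glue B (B.min' ⟨x, hxB⟩) r) = r
        exact (glue_facts hxB hBS hrP).2.2
      · intro q hq
        obtain ⟨hq1, hfib⟩ := Finset.mem_filter.mp hq
        obtain ⟨hqP, hqR⟩ := Finset.mem_filter.mp hq1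
        exact pc_cut hqP hx hfib
    rw [Finset.sum_congr rfl hstep2]
    by_cases hdisc : Disc (S \ A) q'
    · have hite : ∀ B ∈ Bb, pw B.card * (if Disc (S \ B) q' then 1 else 0)
          = if (A \ B).card ≤ 1 then pw B.card else 0 := by
        intro B hB
        obtain ⟨hBA, hxB⟩ := (hBbmem B).mp hB
        by_cases hc : (A \ B).card ≤ 1
        · rw [if_pos ((disc_sdiff_iff hx hA hxB hBA).mpr ⟨hdisc, hc⟩), mul_one, if_pos hc]
        · rw [if_neg (fun hd => hc ((disc_sdiff_iff hx hA hxB hBA).mp hd).2), mul_zero,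
            if_neg hc]
      rw [Finset.sum_congr rfl hite, ← Finset.sum_filter]
      have hAnotmem : A ∉ (A.erase x).image fun y => A.erase y := by
        rw [Finset.mem_image]
        rintro ⟨y, hy, hAy⟩
        have hyA : y ∈ A := Finset.mem_of_mem_erase hy
        rw [← hAy] at hyA
        exact (Finset.mem_erase.mp hyA).1 rfl
      have hsetfilter : Bb.filter (fun B => (A \ B).card ≤ 1)
          = insert A ((A.erase x).image fun y => A.erase y) := by
        ext B
        simp only [Finset.mem_filter, Finset.mem_insert, Finset.mem_image]
        constructor
        · rintro ⟨hBBb, hcard⟩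
          obtain ⟨hBA, hxB⟩ := (hBbmem B).mp hBBb
          rcases Nat.le_one_iff_eq_zero_or_eq_one.mp hcard with h0 | h1
          · left
            rw [Finset.card_eq_zero] at h0
            exact Finset.Subset.antisymm hBA
              (Finset.sdiff_eq_empty_iff_subset.mp h0)
          · right
            obtain ⟨y, hy⟩ := Finset.card_eq_one.mp h1
            have hyAB : y ∈ A \ B := hy ▸ Finset.mem_singleton_self y
            have hyA : y ∈ A := (Finset.mem_sdiff.mp hyAB).1
            have hynB : y ∉ B := (Finset.mem_sdiff.mp hyAB).2
            have hynx : y ≠ x := fun h => hynB (h ▸ hxB)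
            refine ⟨y, Finset.mem_erase.mpr ⟨hynx, hyA⟩, ?_⟩
            ext u
            rw [Finset.mem_erase]
            constructor
            · rintro ⟨hne, huA⟩
              by_contra hunB
              have : u ∈ A \ B := Finset.mem_sdiff.mpr ⟨huA, hunB⟩
              rw [hy, Finset.mem_singleton] at this
              exact hne this
            · intro huB
              refine ⟨fun h => hynB (h ▸ huB), hBA huB⟩
        · rintro (rfl | ⟨y, hy, rfl⟩)
          · refine ⟨(hBbmem A).mpr ⟨le_rfl, hxA⟩, ?_⟩
            rw [Finset.sdiff_self]
            simp
          · have hyA : y ∈ A := Finset.mem_of_mem_erase hy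
            have hynx : y ≠ x := (Finset.mem_erase.mp hy).1
            refine ⟨(hBbmem _).mpr ⟨Finset.erase_subset _ _,
              Finset.mem_erase.mpr ⟨fun h => hynx h.symm, hxA⟩⟩, ?_⟩
            have : A \ A.erase y = {y} := by
              ext u
              simp only [Finset.mem_sdiff, Finset.mem_erase, Finset.mem_singleton]
              constructor
              · rintro ⟨huA, hne⟩
                by_contra huy
                exact hne ⟨huy, huA⟩
              · rintro rfl
                exact ⟨hyA, fun h => h.1 rfl⟩
            rw [this, Finset.card_singleton]
      rw [hsetfilter, Finset.sum_insert hAnotmem]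
      have hinj : ∀ y ∈ A.erase x, ∀ z ∈ A.erase x,
          A.erase y = A.erase z → y = z := by
        intro y hy z hz h
        by_contra hne
        have hzA : z ∈ A := Finset.mem_of_mem_erase hz
        have : z ∈ A.erase y := Finset.mem_erase.mpr ⟨fun hh => hne hh.symm, hzA⟩
        rw [h] at this
        exact (Finset.mem_erase.mp this).1 rfl
      rw [Finset.sum_image hinj]
      have hcardsame : ∀ y ∈ A.erase x, pw ((A.erase y).card) = pw (A.card - 1) := by
        intro y hy
        rw [Finset.card_erase_of_mem (Finset.mem_of_mem_erase hy)]
      rw [Finset.sum_congr rfl hcardsame, Finset.sum_const,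
        Finset.card_erase_of_mem hxA]
      by_cases hAx : A = {x}
      · rw [if_pos ((disc_iff hx hA).mpr ⟨hdisc, hAx⟩), hAx]
        simp [pw_one]
      · rw [if_neg (fun hd => hAx ((disc_iff hx hA).mp hd).2)]
        have hA2 : 2 ≤ A.card := by
          rcases Nat.lt_or_ge A.card 2 with h | h
          · interval_cases h' : A.card
            · exact absurd (Finset.card_eq_zero.mp h') (Finset.nonempty_iff_ne_empty.mp ⟨x, hxA⟩)
            · obtain ⟨y, hy⟩ := Finset.card_eq_one.mp h'
              rw [hy] at hxA
              rw [Finset.mem_singleton] at hxA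
              exact absurd (hxA ▸ hy) hAx
          · exact h
        obtain ⟨b, hb⟩ : ∃ b, A.card = b + 2 :=
          ⟨A.card - 2, by omega⟩
        rw [hb]
        have h1 : b + 2 - 1 = b + 1 := by omega
        rw [h1, nsmul_eq_mul]
        push_cast
        have := pw_sum b
        push_cast at this
        linarith [this]
    · have hz : ∀ B ∈ Bb, pw B.card * (if Disc (S \ B) q' then 1 else 0) = 0 := by
        intro B hB
        obtain ⟨hBA, hxB⟩ := (hBbmem B).mp hB
        rw [if_neg, mul_zero]
        intro hd
        exact hdisc ((disc_sdiff_iff hx hA hxB hBA).mp hd).1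
      rw [Finset.sum_congr rfl hz, Finset.sum_const_zero, if_neg]
      intro hd
      exact hdisc (disc_mono Finset.sdiff_subset hd)



section Hyper

lemma homCount_eq (G H : NatHypergraph) :
    homCount G H = ((mapsTo H.verts G.verts).filter fun f => IsHom H G f).card := by
  rw [homCount, ← Set.ncard_coe_finset]
  congr 1
  ext f
  simp only [Set.mem_setOf_eq, Finset.coe_filter, Finset.mem_coe, Finset.mem_filter]
  rw [mem_mapsTo]
  constructor
  · rintro ⟨h1, h2⟩
    exact ⟨⟨h1.1, h2⟩, h1⟩
  · rintro ⟨⟨_, h2⟩, h1⟩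
    exact ⟨h1, h2⟩

/-- The discrete representative map. -/
def qdisc (H : NatHypergraph) : ℕ → ℕ := fun v => if v ∈ H.verts then v else 0

lemma qdisc_mem_Parts (H : NatHypergraph) : qdisc H ∈ Parts H.verts := by
  refine Finset.mem_filter.mpr ⟨mem_mapsTo.mpr ⟨?_, ?_⟩, ?_⟩
  · intro v hv; rw [qdisc, if_pos hv]; exact hv
  · intro v hv; rw [qdisc, if_neg hv]
  · funext v
    by_cases hv : v ∈ H.verts
    · have h1 : H.verts.filter (fun u => qdisc H u = qdisc H v) = {v} := by
        ext u
        simp only [Finset.mem_filter, Finset.mem_singleton]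
        constructor
        · rintro ⟨hu, h2⟩
          rw [qdisc, if_pos hu, qdisc, if_pos hv] at h2
          exact h2
        · rintro rfl
          exact ⟨hv, rfl⟩
      rw [pker, dif_pos hv]
      simp only [h1, Finset.min'_singleton]
      rw [qdisc, if_pos hv]
    · rw [pker_of_not_mem hv, qdisc, if_neg hv]

lemma disc_iff_qdisc {H : NatHypergraph} {q : ℕ → ℕ} (hq : q ∈ Parts H.verts) :
    Disc H.verts q ↔ q = qdisc H := by
  constructor
  · intro hd
    funext v
    by_cases hv : v ∈ H.verts
    · rw [qdisc, if_pos hv]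
      exact hd (q v) (Parts_mem hq hv) v hv (Parts_idem hq hv)
    · rw [qdisc, if_neg hv]
      exact Parts_zero hq hv
  · rintro rfl
    intro u hu v hv h
    rw [qdisc, if_pos hu, qdisc, if_pos hv] at h
    exact h

/-- Count of homomorphisms with prescribed kernel. -/
def Nq (G H : NatHypergraph) (q : ℕ → ℕ) : ℕ :=
  ((mapsTo H.verts G.verts).filter fun f => IsHom H G f ∧ pker H.verts f = q).card

lemma quotientBy_qdisc {H : NatHypergraph} (hH : H.Good) : quotientBy H (qdisc H) = H := by
  have himg : ∀ e : Finset ℕ, e ⊆ H.verts → e.image (qdisc H) = e := by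
    intro e he
    rw [show e.image (qdisc H) = e.image id from
      Finset.image_congr fun v hv => by rw [qdisc, if_pos (he hv)]; rfl, Finset.image_id]
  rw [quotientBy]
  cases H with
  | mk verts edges =>
    congr 1
    · exact himg verts le_rfl
    · rw [show edges.image (fun e => e.image (qdisc ⟨verts, edges⟩)) = edges.image id from
        Finset.image_congr fun e he => by
          rw [himg e (hH e he).1]; rfl, Finset.image_id]

lemma quotientBy_good {H : NatHypergraph} (hH : H.Good) (q : ℕ → ℕ) :
    (quotientBy H q).Good := by
  intro e he
  obtain ⟨e', he', rfl⟩ := Finset.mem_image.mp he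
  obtain ⟨hsub, hne⟩ := hH e' he'
  exact ⟨Finset.image_subset_image hsub, hne.image q⟩

lemma hom_quot_eq {H : NatHypergraph} (hH : H.Good) (G : NatHypergraph) {q : ℕ → ℕ}
    (hq : q ∈ Parts H.verts) :
    homCount G (quotientBy H q)
      = ∑ q' ∈ (Parts H.verts).filter (fun q2 => Refines H.verts q q2), Nq G H q' := by
  rw [homCount_eq]
  -- first: bijection with q-constant homs from H
  have hcard : ((mapsTo (quotientBy H q).verts G.verts).filter
        fun h => IsHom (quotientBy H q) G h).card
      = ((mapsTo H.verts G.verts).filter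
        fun f => IsHom H G f ∧ Refines H.verts q f).card := by
    refine Finset.card_bij' (fun h _ => fun v => if v ∈ H.verts then h (q v) else 0)
      (fun f _ => fun w => if hw : w ∈ H.verts.image q
        then f (Finset.mem_image.mp hw).choose else 0) ?_ ?_ ?_ ?_
    · -- forward maps into target
      intro h hh
      beta_reduce
      obtain ⟨hmt, hhom⟩ := Finset.mem_filter.mp hh
      rw [mem_mapsTo] at hmt
      refine Finset.mem_filter.mpr ⟨mem_mapsTo.mpr ⟨?_, ?_⟩, ⟨?_, ?_⟩, ?_⟩
      · intro v hv
        simp only [if_pos hv]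
        exact hmt.1 (q v) (Finset.mem_image_of_mem q hv)
      · intro v hv
        simp only [if_neg hv]
      · intro v hv
        simp only [if_pos hv]
        exact hhom.1 (q v) (Finset.mem_image_of_mem q hv)
      · intro e he
        have hesub : e ⊆ H.verts := (hH e he).1
        have : e.image (fun v => if v ∈ H.verts then h (q v) else 0)
            = (e.image q).image h := by
          rw [Finset.image_image]
          exact Finset.image_congr fun v hv => by simp only [Function.comp]; rw [if_pos (hesub hv)]
        rw [this]
        exact hhom.2 (e.image q) (Finset.mem_image_of_mem _ he)
      · intro u hu v hv huv
        simp only [if_pos hu, if_pos hv, huv]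
    · -- backward maps into source
      intro f hf
      beta_reduce
      obtain ⟨hmt, hhom, hconst⟩ := Finset.mem_filter.mp hf
      rw [mem_mapsTo] at hmt
      have hval : ∀ v ∈ H.verts,
          (if hw : q v ∈ H.verts.image q
            then f (Finset.mem_image.mp hw).choose else 0) = f v := by
        intro v hv
        have hqv : q v ∈ H.verts.image q := Finset.mem_image_of_mem q hv
        simp only [dif_pos hqv]
        have hspec := (Finset.mem_image.mp hqv).choose_spec
        exact hconst _ hspec.1 v hv hspec.2
      refine Finset.mem_filter.mpr ⟨mem_mapsTo.mpr ⟨?_, ?_⟩, ?_, ?_⟩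
      · intro w hw
        obtain ⟨v, hv, rfl⟩ := Finset.mem_image.mp hw
        beta_reduce
        rw [hval v hv]
        exact hmt.1 v hv
      · intro w hw
        beta_reduce
        exact dif_neg hw
      · intro w hw
        obtain ⟨v, hv, rfl⟩ := Finset.mem_image.mp hw
        beta_reduce
        rw [hval v hv]
        exact hhom.1 v hv
      · intro e' he'
        obtain ⟨e, he, rfl⟩ := Finset.mem_image.mp he'
        beta_reduce
        have hesub : e ⊆ H.verts := (hH e he).1
        have : (e.image q).image (fun w => if hw : w ∈ H.verts.image q
            then f (Finset.mem_image.mp hw).choose else 0) = e.image f := by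
          rw [Finset.image_image]
          exact Finset.image_congr fun v hv => by
            simp only [Function.comp]; exact hval v (hesub hv)
        rw [this]
        exact hhom.2 e he
    · -- left inverse
      intro h hh
      beta_reduce
      obtain ⟨hmt, hhom⟩ := Finset.mem_filter.mp hh
      rw [mem_mapsTo] at hmt
      funext w
      beta_reduce
      by_cases hw : w ∈ H.verts.image q
      · obtain ⟨v, hv, rfl⟩ := Finset.mem_image.mp hw
        beta_reduce
        simp only [dif_pos hw]
        have hspec := (Finset.mem_image.mp hw).choose_spec
        rw [if_pos hspec.1, hspec.2]
      · beta_reduce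
        rw [dif_neg hw]
        exact (hmt.2 w hw).symm
    · -- right inverse
      intro f hf
      beta_reduce
      obtain ⟨hmt, hhom, hconst⟩ := Finset.mem_filter.mp hf
      rw [mem_mapsTo] at hmt
      funext v
      beta_reduce
      by_cases hv : v ∈ H.verts
      · simp only [if_pos hv]
        have hqv : q v ∈ H.verts.image q := Finset.mem_image_of_mem q hv
        simp only [dif_pos hqv]
        have hspec := (Finset.mem_image.mp hqv).choose_spec
        exact hconst _ hspec.1 v hv hspec.2
      · simp only [if_neg hv]
        exact (hmt.2 v hv).symm
  rw [hcard]
  -- now decompose fiberwise by the kernel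
  have hmapsker : ∀ f ∈ (mapsTo H.verts G.verts).filter
      (fun f => IsHom H G f ∧ Refines H.verts q f),
      pker H.verts f ∈ (Parts H.verts).filter (fun q2 => Refines H.verts q q2) := by
    intro f hf
    obtain ⟨hmt, hhom, hconst⟩ := Finset.mem_filter.mp hf
    refine Finset.mem_filter.mpr ⟨pker_mem_Parts _ _, ?_⟩
    intro u hu v hv huv
    rw [pker_eq_iff f hu hv]
    exact hconst u hu v hv huv
  rw [Finset.card_eq_sum_card_fiberwise hmapsker]
  refine Finset.sum_congr rfl fun q2 hq2 => ?_
  obtain ⟨hq2P, hq2R⟩ := Finset.mem_filter.mp hq2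
  rw [Nq]
  congr 1
  ext f
  simp only [Finset.mem_filter]
  constructor
  · rintro ⟨⟨hmt, hhom, hconst⟩, hker⟩
    exact ⟨hmt, hhom, hker⟩
  · rintro ⟨hmt, hhom, hker⟩
    refine ⟨⟨hmt, hhom, ?_⟩, hker⟩
    intro u hu v hv huv
    have h2 := hq2R u hu v hv huv
    rw [← hker] at h2
    exact (pker_eq_iff f hu hv).mp h2

end Hyper

section Inversion

variable {H : NatHypergraph} (hH : H.Good) (G : NatHypergraph)

lemma inv_eq {H : NatHypergraph} (hH : H.Good) (G : NatHypergraph) :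
    (Nq G H (qdisc H) : ℚ)
      = ∑ q ∈ Parts H.verts, pc H.verts q * (homCount G (quotientBy H q) : ℚ) := by
  have step : ∀ q ∈ Parts H.verts,
      pc H.verts q * (homCount G (quotientBy H q) : ℚ)
        = ∑ q' ∈ Parts H.verts,
            (if Refines H.verts q q' then pc H.verts q * (Nq G H q' : ℚ) else 0) := by
    intro q hq
    rw [hom_quot_eq hH G hq]
    push_cast
    rw [Finset.mul_sum, Finset.sum_filter]
  rw [Finset.sum_congr rfl step, Finset.sum_comm]
  have step2 : ∀ q' ∈ Parts H.verts,
      (∑ q ∈ Parts H.verts,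
        if Refines H.verts q q' then pc H.verts q * (Nq G H q' : ℚ) else 0)
        = (if Disc H.verts q' then 1 else 0) * (Nq G H q' : ℚ) := by
    intro q' _
    have : (∑ q ∈ Parts H.verts,
        if Refines H.verts q q' then pc H.verts q * (Nq G H q' : ℚ) else 0)
        = (∑ q ∈ (Parts H.verts).filter (fun q => Refines H.verts q q'), pc H.verts q)
            * (Nq G H q' : ℚ) := by
      rw [Finset.sum_mul, Finset.sum_filter]
    rw [this, main_id]
  rw [Finset.sum_congr rfl step2]
  have step3 : ∀ q' ∈ Parts H.verts,
      (if Disc H.verts q' then 1 else 0) * (Nq G H q' : ℚ)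
        = if q' = qdisc H then (Nq G H q' : ℚ) else 0 := by
    intro q' hq'
    by_cases h : Disc H.verts q'
    · rw [if_pos h, one_mul, if_pos ((disc_iff_qdisc hq').mp h)]
    · rw [if_neg h, zero_mul, if_neg (fun he => h ((disc_iff_qdisc hq').mpr he))]
  rw [Finset.sum_congr rfl step3, Finset.sum_ite_eq' (Parts H.verts) (qdisc H)
    (fun q' => (Nq G H q' : ℚ)), if_pos (qdisc_mem_Parts H)]

end Inversion

section SubAut

/-- Functions fixed off `S`, mapping `S` into `S`. -/
def mapsId (S : Finset ℕ) : Finset (ℕ → ℕ) :=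
  (S.pi fun _ => S).image fun g v => if h : v ∈ S then g v h else v

lemma mem_mapsId {S : Finset ℕ} {f : ℕ → ℕ} :
    f ∈ mapsId S ↔ (∀ v ∈ S, f v ∈ S) ∧ ∀ v ∉ S, f v = v := by
  constructor
  · rintro hf
    obtain ⟨g, hg, rfl⟩ := Finset.mem_image.mp hf
    constructor
    · intro v hv
      simp only [dif_pos hv]
      exact Finset.mem_pi.mp hg v hv
    · intro v hv; simp [dif_neg hv]
  · rintro ⟨h1, h2⟩
    refine Finset.mem_image.mpr ⟨fun v _ => f v, ?_, ?_⟩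
    · exact Finset.mem_pi.mpr fun v hv => h1 v hv
    · funext v
      by_cases hv : v ∈ S
      · simp [dif_pos hv]
      · simp [dif_neg hv, h2 v hv]

def autF (H : NatHypergraph) : Finset (ℕ → ℕ) :=
  (mapsId H.verts).filter fun f => Set.BijOn f ↑H.verts ↑H.verts ∧
    H.edges.image (fun e => e.image f) = H.edges

lemma autCount_eq (H : NatHypergraph) : autCount H = (autF H).card := by
  rw [autCount, ← Set.ncard_coe_finset]
  congr 1
  ext f
  simp only [Set.mem_setOf_eq, Finset.mem_coe]
  constructor
  · rintro ⟨h1, h2, h3⟩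
    refine Finset.mem_filter.mpr ⟨mem_mapsId.mpr ⟨?_, h1⟩, h2, h3⟩
    intro v hv
    exact Finset.mem_coe.mp (h2.1 (Finset.mem_coe.mpr hv))
  · intro hf
    obtain ⟨hm, h2, h3⟩ := Finset.mem_filter.mp hf
    exact ⟨(mem_mapsId.mp hm).2, h2, h3⟩

lemma autF_pos (H : NatHypergraph) : 0 < (autF H).card := by
  refine Finset.card_pos.mpr ⟨id, Finset.mem_filter.mpr ⟨?_, ?_, ?_⟩⟩
  · exact mem_mapsId.mpr ⟨fun v hv => hv, fun v _ => rfl⟩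
  · exact Set.bijOn_id _
  · rw [show (fun e : Finset ℕ => e.image id) = id from funext fun e => Finset.image_id,
      Finset.image_id]

def subF (G H : NatHypergraph) : Finset (Finset ℕ × Finset (Finset ℕ)) :=
  (G.verts.powerset ×ˢ G.edges.powerset).filter fun p =>
    (∀ e ∈ p.2, e ⊆ p.1) ∧ Isomorphic H ⟨p.1, p.2⟩

lemma subCount_eq (G H : NatHypergraph) : subCount G H = (subF G H).card := by
  rw [subCount, ← Set.ncard_coe_finset]
  congr 1
  ext p
  simp only [Set.mem_setOf_eq, Finset.mem_coe]
  constructor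
  · rintro ⟨h1, h2, h3⟩
    refine Finset.mem_filter.mpr ⟨Finset.mem_product.mpr ⟨?_, ?_⟩, fun e he => (h2 e he).2, h3⟩
    · exact Finset.mem_powerset.mpr h1
    · exact Finset.mem_powerset.mpr fun e he => (h2 e he).1
  · intro hp
    obtain ⟨hpow, h3, h4⟩ := Finset.mem_filter.mp hp
    obtain ⟨hp1, hp2⟩ := Finset.mem_product.mp hpow
    rw [Finset.mem_powerset] at hp1 hp2
    exact ⟨hp1, fun e he => ⟨hp2 he, h3 e he⟩, h4⟩

lemma bijimg {s t : Finset ℕ} {f : ℕ → ℕ} (h : Set.BijOn f ↑s ↑t) : s.image f = t := by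
  refine Finset.coe_inj.mp ?_
  rw [Finset.coe_image, h.image_eq]

lemma ker_qdisc_iff {H : NatHypergraph} {f : ℕ → ℕ} :
    pker H.verts f = qdisc H ↔ Set.InjOn f ↑H.verts := by
  constructor
  · intro h u hu v hv huv
    simp only [Finset.mem_coe] at hu hv
    have h2 : pker H.verts f u = pker H.verts f v := (pker_eq_iff f hu hv).mpr huv
    rw [h] at h2
    simp only [qdisc, if_pos hu, if_pos hv] at h2
    exact h2
  · intro hinj
    funext v
    by_cases hv : v ∈ H.verts
    · have h1 : H.verts.filter (fun u => f u = f v) = {v} := by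
        ext u
        simp only [Finset.mem_filter, Finset.mem_singleton]
        constructor
        · rintro ⟨hu, h2⟩
          exact hinj (Finset.mem_coe.mpr hu) (Finset.mem_coe.mpr hv) h2
        · rintro rfl
          exact ⟨hv, rfl⟩
      rw [pker, dif_pos hv]
      simp only [h1, Finset.min'_singleton]
      rw [qdisc, if_pos hv]
    · rw [pker_of_not_mem hv, qdisc, if_neg hv]

lemma sub_mul_aut {H : NatHypergraph} (hH : H.Good) (G : NatHypergraph) :
    Nq G H (qdisc H) = (subF G H).card * (autF H).card := by
  rw [Nq]
  set injF := (mapsTo H.verts G.verts).filter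
    (fun f => IsHom H G f ∧ pker H.verts f = qdisc H) with hinjF
  have hmaps : ∀ f ∈ injF,
      (H.verts.image f, H.edges.image fun e => e.image f) ∈ subF G H := by
    intro f hf
    obtain ⟨hmt, hhom, hker⟩ := Finset.mem_filter.mp hf
    rw [mem_mapsTo] at hmt
    have hinj : Set.InjOn f ↑H.verts := ker_qdisc_iff.mp hker
    refine Finset.mem_filter.mpr ⟨Finset.mem_product.mpr ⟨?_, ?_⟩, ?_, ?_⟩
    · rw [Finset.mem_powerset]
      intro w hw
      obtain ⟨v, hv, rfl⟩ := Finset.mem_image.mp hw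
      exact hmt.1 v hv
    · rw [Finset.mem_powerset]
      intro e' he'
      obtain ⟨e, he, rfl⟩ := Finset.mem_image.mp he'
      exact hhom.2 e he
    · intro e' he'
      obtain ⟨e, he, rfl⟩ := Finset.mem_image.mp he'
      exact Finset.image_subset_image (hH e he).1
    · refine ⟨f, ?_, rfl⟩
      rw [Finset.coe_image]
      exact hinj.bijOn_image
  rw [Finset.card_eq_sum_card_fiberwise hmaps]
  have hfib : ∀ p ∈ subF G H,
      (injF.filter fun f =>
        (H.verts.image f, H.edges.image fun e => e.image f) = p).card
        = (autF H).card := by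
    intro p hp
    obtain ⟨hpow, hp2sub, g, hgbij0, hgedges0⟩ := Finset.mem_filter.mp hp
    obtain ⟨hp1, hp2⟩ := Finset.mem_product.mp hpow
    rw [Finset.mem_powerset] at hp1 hp2
    have hgbij : Set.BijOn g ↑H.verts ↑p.1 := hgbij0
    have hgedges : p.2 = H.edges.image fun e => e.image g := hgedges0
    set g0 : ℕ → ℕ := fun v => if v ∈ H.verts then g v else 0 with hg0def
    have hg0 : ∀ v ∈ H.verts, g0 v = g v := fun v hv => if_pos hv
    have hg0img : ∀ e : Finset ℕ, e ⊆ H.verts → e.image g0 = e.image g :=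
      fun e he => Finset.image_congr fun v hv => hg0 v (he hv)
    have hg0bij : Set.BijOn g0 ↑H.verts ↑p.1 := by
      refine Set.BijOn.congr hgbij fun v hv => (hg0 v hv).symm
    have hg0inj : Set.InjOn g0 ↑H.verts := hg0bij.injOn
    have himgV : H.verts.image g0 = p.1 := bijimg hg0bij
    have himgE : H.edges.image (fun e => e.image g0) = p.2 := by
      rw [hgedges]
      exact Finset.image_congr fun e he => hg0img e (hH e he).1
    have famInj : ∀ A B : Finset (Finset ℕ), (∀ s ∈ A, s ⊆ H.verts) →
        (∀ s ∈ B, s ⊆ H.verts) →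
        A.image (fun e => e.image g0) = B.image (fun e => e.image g0) → A = B := by
      have hsetinj : ∀ s t : Finset ℕ, s ⊆ H.verts → t ⊆ H.verts →
          s.image g0 = t.image g0 → s = t := by
        intro s t hs ht hst
        ext u
        constructor
        · intro hu
          have h1 : g0 u ∈ t.image g0 := by
            rw [← hst]; exact Finset.mem_image_of_mem g0 hu
          obtain ⟨u', hu', h2⟩ := Finset.mem_image.mp h1
          rwa [← hg0inj (ht hu') (hs hu) h2]
        · intro hu
          have h1 : g0 u ∈ s.image g0 := by
            rw [hst]; exact Finset.mem_image_of_mem g0 hu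
          obtain ⟨u', hu', h2⟩ := Finset.mem_image.mp h1
          rwa [← hg0inj (hs hu') (ht hu) h2]
      intro A B hA hB hAB
      ext e
      constructor
      · intro he
        have h1 : e.image g0 ∈ B.image (fun e => e.image g0) := by
          rw [← hAB]; exact Finset.mem_image_of_mem _ he
        obtain ⟨e2, he2, h2⟩ := Finset.mem_image.mp h1
        rw [← hsetinj e2 e (hB e2 he2) (hA e he) h2]
        exact he2
      · intro he
        have h1 : e.image g0 ∈ A.image (fun e => e.image g0) := by
          rw [hAB]; exact Finset.mem_image_of_mem _ he
        obtain ⟨e2, he2, h2⟩ := Finset.mem_image.mp h1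
        rw [← hsetinj e2 e (hA e2 he2) (hB e he) h2]
        exact he2
    set inv0 := Function.invFunOn g0 ↑H.verts with hinv0
    -- facts about members of the fiber
    have hfibfacts : ∀ f, f ∈ injF.filter (fun f =>
        (H.verts.image f, H.edges.image fun e => e.image f) = p) →
        (∀ v ∈ H.verts, f v ∈ G.verts) ∧ (∀ v ∉ H.verts, f v = 0) ∧ IsHom H G f ∧
          Set.InjOn f ↑H.verts ∧ H.verts.image f = p.1 ∧
          (H.edges.image fun e => e.image f) = p.2 ∧
          (∀ v ∈ H.verts, ∃ a ∈ (↑H.verts : Set ℕ), g0 a = f v) := by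
      intro f hf
      obtain ⟨hf1, hΘ⟩ := Finset.mem_filter.mp hf
      obtain ⟨hmt, hhom, hker⟩ := Finset.mem_filter.mp hf1
      rw [mem_mapsTo] at hmt
      have hfV : H.verts.image f = p.1 := congrArg Prod.fst hΘ
      have hfE : (H.edges.image fun e => e.image f) = p.2 := congrArg Prod.snd hΘ
      refine ⟨hmt.1, hmt.2, hhom, ker_qdisc_iff.mp hker, hfV, hfE, ?_⟩
      intro v hv
      have h1 : f v ∈ p.1 := by
        rw [← hfV]; exact Finset.mem_image_of_mem f hv
      have h2 : (f v : ℕ) ∈ g0 '' ↑H.verts := by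
        rw [hg0bij.image_eq]
        exact_mod_cast h1
      obtain ⟨a, ha, h3⟩ := h2
      exact ⟨a, ha, h3⟩
    refine Finset.card_bij' (fun f _ => fun v => if v ∈ H.verts then inv0 (f v) else v)
      (fun a _ => fun v => if v ∈ H.verts then g0 (a v) else 0) ?_ ?_ ?_ ?_
    · -- i f ∈ autF
      intro f hf
      obtain ⟨hmtv, hz, hhom, hfinj, hfV, hfE, hex⟩ := hfibfacts f hf
      beta_reduce
      have hval : ∀ v ∈ H.verts, g0 (inv0 (f v)) = f v := by
        intro v hv
        exact Function.invFunOn_eq (hex v hv)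
      have hmem : ∀ v ∈ H.verts, inv0 (f v) ∈ H.verts := by
        intro v hv
        exact Function.invFunOn_mem (hex v hv)
      have hainj : ∀ u ∈ H.verts, ∀ v ∈ H.verts, inv0 (f u) = inv0 (f v) → u = v := by
        intro u hu v hv h
        have : f u = f v := by
          rw [← hval u hu, ← hval v hv, h]
        exact hfinj hu hv this
      refine Finset.mem_filter.mpr ⟨mem_mapsId.mpr ⟨?_, ?_⟩, ?_, ?_⟩
      · intro v hv
        simp only [if_pos hv]
        exact hmem v hv
      · intro v hv
        simp only [if_neg hv]
      · constructor
        · intro v hv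
          simp only [Finset.mem_coe] at hv
          simp only [if_pos hv]
          exact hmem v hv
        constructor
        · intro u hu v hv h
          simp only [Finset.mem_coe] at hu hv
          simp only [if_pos hu, if_pos hv] at h
          exact hainj u hu v hv h
        · intro v hv
          simp only [Finset.mem_coe] at hv
          have h1 : g0 v ∈ p.1 := by
            rw [← himgV]; exact Finset.mem_image_of_mem g0 hv
          rw [← hfV] at h1
          obtain ⟨u, hu, h2⟩ := Finset.mem_image.mp h1
          refine ⟨u, Finset.mem_coe.mpr hu, ?_⟩
          simp only [if_pos hu]
          rw [h2, hinv0]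
          exact hg0inj.leftInvOn_invFunOn hv
      · refine famInj _ _ ?_ ?_ ?_
        · intro s hs
          obtain ⟨e, he, rfl⟩ := Finset.mem_image.mp hs
          intro w hw
          obtain ⟨v, hv, rfl⟩ := Finset.mem_image.mp hw
          have hv' : v ∈ H.verts := (hH e he).1 hv
          simp only [if_pos hv']
          exact hmem v hv'
        · exact fun s hs => (hH s hs).1
        · rw [Finset.image_image]
          have hstep : ∀ e ∈ H.edges,
              ((fun e => e.image g0) ∘ fun e : Finset ℕ =>
                e.image (fun v => if v ∈ H.verts then inv0 (f v) else v)) e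
                = e.image f := by
            intro e he
            simp only [Function.comp]
            rw [Finset.image_image]
            refine Finset.image_congr fun v hv => ?_
            have hv' : v ∈ H.verts := (hH e he).1 hv
            simp only [Function.comp, if_pos hv']
            exact hval v hv'
          rw [Finset.image_congr hstep, hfE, himgE]
    · -- j a ∈ fiber
      intro a ha
      obtain ⟨hamid, habij, haedges⟩ := Finset.mem_filter.mp ha
      rw [mem_mapsId] at hamid
      beta_reduce
      have hav : ∀ v ∈ H.verts, a v ∈ H.verts := hamid.1
      have hjhomimg : ∀ e : Finset ℕ, e ⊆ H.verts →
          e.image (fun v => if v ∈ H.verts then g0 (a v) else 0)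
            = (e.image a).image g0 := by
        intro e he
        rw [Finset.image_image]
        refine Finset.image_congr fun v hv => ?_
        simp only [Function.comp, if_pos (he hv)]
      refine Finset.mem_filter.mpr ⟨Finset.mem_filter.mpr ⟨mem_mapsTo.mpr ⟨?_, ?_⟩,
        ⟨?_, ?_⟩, ?_⟩, ?_⟩
      · intro v hv
        simp only [if_pos hv]
        have h1 : g0 (a v) ∈ p.1 := by
          rw [← himgV]; exact Finset.mem_image_of_mem g0 (hav v hv)
        exact hp1 h1
      · intro v hv
        simp only [if_neg hv]
      · intro v hv
        simp only [if_pos hv]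
        have h1 : g0 (a v) ∈ p.1 := by
          rw [← himgV]; exact Finset.mem_image_of_mem g0 (hav v hv)
        exact hp1 h1
      · intro e he
        rw [hjhomimg e (hH e he).1]
        have h1 : e.image a ∈ H.edges := by
          rw [← haedges]; exact Finset.mem_image_of_mem _ he
        have h2 : (e.image a).image g0 ∈ p.2 := by
          rw [← himgE]; exact Finset.mem_image_of_mem _ h1
        exact hp2 h2
      · rw [ker_qdisc_iff]
        intro u hu v hv h
        simp only [Finset.mem_coe] at hu hv
        simp only [if_pos hu, if_pos hv] at h
        have h1 : a u = a v := hg0inj (Finset.mem_coe.mpr (hav u hu))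
          (Finset.mem_coe.mpr (hav v hv)) h
        exact habij.injOn (Finset.mem_coe.mpr hu) (Finset.mem_coe.mpr hv) h1
      · have h1 : H.verts.image (fun v => if v ∈ H.verts then g0 (a v) else 0) = p.1 := by
          rw [hjhomimg H.verts (le_refl _), bijimg habij, himgV]
        have h2 : H.edges.image (fun e =>
            e.image (fun v => if v ∈ H.verts then g0 (a v) else 0)) = p.2 := by
          have hstep : ∀ e ∈ H.edges,
              e.image (fun v => if v ∈ H.verts then g0 (a v) else 0)
                = (fun e : Finset ℕ => (e.image a).image g0) e :=
            fun e he => hjhomimg e (hH e he).1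
          rw [Finset.image_congr hstep]
          have h3 : H.edges.image (fun e : Finset ℕ => (e.image a).image g0)
              = (H.edges.image (fun e => e.image a)).image (fun e => e.image g0) := by
            rw [Finset.image_image]
            rfl
          rw [h3, haedges, himgE]
        exact Prod.ext_iff.mpr ⟨h1, h2⟩
    · -- left inverse
      intro f hf
      obtain ⟨hmtv, hz, hhom, hfinj, hfV, hfE, hex⟩ := hfibfacts f hf
      beta_reduce
      funext v
      by_cases hv : v ∈ H.verts
      · simp only [if_pos hv]
        exact Function.invFunOn_eq (hex v hv)
      · simp only [if_neg hv]
        exact (hz v hv).symm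
    · -- right inverse
      intro a ha
      obtain ⟨hamid, habij, haedges⟩ := Finset.mem_filter.mp ha
      rw [mem_mapsId] at hamid
      beta_reduce
      funext v
      by_cases hv : v ∈ H.verts
      · simp only [if_pos hv]
        have : g0 (a v) ∈ g0 '' ↑H.verts :=
          Set.mem_image_of_mem g0 (Finset.mem_coe.mpr (hamid.1 v hv))
        exact hg0inj.leftInvOn_invFunOn (Finset.mem_coe.mpr (hamid.1 v hv))
      · simp only [if_neg hv]
        exact (hamid.2 v hv).symm
  rw [Finset.sum_congr rfl hfib, Finset.sum_const, smul_eq_mul]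

end SubAut

section Iso

lemma iso_refl (H : NatHypergraph) : Isomorphic H H := by
  refine ⟨id, Set.bijOn_id _, ?_⟩
  rw [show (fun e : Finset ℕ => e.image id) = id from funext fun e => Finset.image_id,
    Finset.image_id]

lemma iso_trans {H1 H2 H3 : NatHypergraph} (h12 : Isomorphic H1 H2) (h23 : Isomorphic H2 H3) :
    Isomorphic H1 H3 := by
  obtain ⟨f, hf, hfe⟩ := h12
  obtain ⟨g, hg, hge⟩ := h23
  refine ⟨g ∘ f, hg.comp hf, ?_⟩
  rw [hge, hfe, Finset.image_image]
  refine Finset.image_congr fun e _ => ?_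
  simp only [Function.comp]
  rw [Finset.image_image]

lemma iso_symm {H1 H2 : NatHypergraph} (hH1 : H1.Good) (h : Isomorphic H1 H2) :
    Isomorphic H2 H1 := by
  obtain ⟨f, hf, hfe⟩ := h
  set g := Function.invFunOn f ↑H1.verts with hg
  have hinv : Set.InvOn g f ↑H1.verts ↑H2.verts :=
    ⟨hf.injOn.leftInvOn_invFunOn, hf.surjOn.rightInvOn_invFunOn⟩
  refine ⟨g, hf.symm hinv.symm, ?_⟩
  rw [hfe, Finset.image_image]
  have : ∀ e ∈ H1.edges, ((fun e : Finset ℕ => e.image g) ∘ fun e : Finset ℕ => e.image f) e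
      = e := by
    intro e he
    simp only [Function.comp]
    rw [Finset.image_image]
    have : e.image (g ∘ f) = e.image id := by
      refine Finset.image_congr fun v hv => ?_
      exact hinv.1 (Finset.mem_coe.mpr ((hH1 e he).1 hv))
    rw [this, Finset.image_id]
  rw [Finset.image_congr this, Finset.image_id']

lemma iso_verts_card {H1 H2 : NatHypergraph} (h : Isomorphic H1 H2) :
    H1.verts.card = H2.verts.card := by
  obtain ⟨f, hf, hfe⟩ := h
  rw [← bijimg hf]
  exact (Finset.card_image_of_injOn hf.injOn).symm

lemma quot_iso_ker {H : NatHypergraph} (hH : H.Good) (f : ℕ → ℕ) :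
    Isomorphic (quotientBy H (pker H.verts f)) (quotientBy H f) := by
  set κ := pker H.verts f with hκ
  refine ⟨f, ⟨?_, ?_, ?_⟩, ?_⟩
  · intro w hw
    simp only [Finset.mem_coe] at hw ⊢
    obtain ⟨v, hv, rfl⟩ := Finset.mem_image.mp hw
    show f (κ v) ∈ (quotientBy H f).verts
    rw [(pker_mem f hv).2]
    exact Finset.mem_image_of_mem f hv
  · intro w1 hw1 w2 hw2 h
    simp only [Finset.mem_coe] at hw1 hw2
    obtain ⟨v1, hv1, rfl⟩ := Finset.mem_image.mp hw1
    obtain ⟨v2, hv2, rfl⟩ := Finset.mem_image.mp hw2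
    have h1 : f v1 = f v2 := by
      rw [← (pker_mem f hv1).2, ← (pker_mem f hv2).2]
      exact h
    rw [hκ]
    exact (pker_eq_iff f hv1 hv2).mpr h1
  · intro u hu
    simp only [Finset.mem_coe] at hu
    obtain ⟨v, hv, rfl⟩ := Finset.mem_image.mp hu
    refine ⟨κ v, ?_, (pker_mem f hv).2⟩
    simp only [Finset.mem_coe]
    exact Finset.mem_image_of_mem κ hv
  · show H.edges.image (fun e => e.image f)
      = (H.edges.image fun e => e.image κ).image (fun e => e.image f)
    rw [Finset.image_image]
    refine (Finset.image_congr fun e he => ?_).symm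
    simp only [Function.comp]
    rw [Finset.image_image]
    refine Finset.image_congr fun v hv => ?_
    simp only [Function.comp]
    exact (pker_mem f ((hH e he).1 hv)).2

lemma hom_iso {H' H'' : NatHypergraph} (hH' : H'.Good) (G : NatHypergraph)
    (h : Isomorphic H' H'') : homCount G H' = homCount G H'' := by
  obtain ⟨g, hg, hge⟩ := h
  set ginv := Function.invFunOn g ↑H'.verts with hginvdef
  have hgmem : ∀ v ∈ H'.verts, g v ∈ H''.verts := by
    intro v hv
    exact Finset.mem_coe.mp (hg.mapsTo (Finset.mem_coe.mpr hv))
  have hginvmem : ∀ w ∈ H''.verts, ginv w ∈ H'.verts := by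
    intro w hw
    have := hg.surjOn (Finset.mem_coe.mpr hw)
    obtain ⟨a, ha, h2⟩ := this
    exact Finset.mem_coe.mp (Function.invFunOn_mem ⟨a, ha, h2⟩)
  have hright : ∀ w ∈ H''.verts, g (ginv w) = w := by
    intro w hw
    have := hg.surjOn (Finset.mem_coe.mpr hw)
    obtain ⟨a, ha, h2⟩ := this
    exact Function.invFunOn_eq ⟨a, ha, h2⟩
  have hleft : ∀ v ∈ H'.verts, ginv (g v) = v := by
    intro v hv
    exact hg.injOn.leftInvOn_invFunOn (Finset.mem_coe.mpr hv)
  rw [homCount_eq, homCount_eq]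
  refine Finset.card_bij' (fun φ _ => fun w => if w ∈ H''.verts then φ (ginv w) else 0)
    (fun h _ => fun v => if v ∈ H'.verts then h (g v) else 0) ?_ ?_ ?_ ?_
  · intro φ hφ
    obtain ⟨hmt, hhom⟩ := Finset.mem_filter.mp hφ
    rw [mem_mapsTo] at hmt
    beta_reduce
    refine Finset.mem_filter.mpr ⟨mem_mapsTo.mpr ⟨?_, ?_⟩, ?_, ?_⟩
    · intro w hw
      simp only [if_pos hw]
      exact hmt.1 _ (hginvmem w hw)
    · intro w hw
      simp only [if_neg hw]
    · intro w hw
      simp only [if_pos hw]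
      exact hhom.1 _ (hginvmem w hw)
    · intro e'' he''
      rw [hge] at he''
      obtain ⟨e, he, rfl⟩ := Finset.mem_image.mp he''
      have hesub : e ⊆ H'.verts := (hH' e he).1
      have : (e.image g).image (fun w => if w ∈ H''.verts then φ (ginv w) else 0)
          = e.image φ := by
        rw [Finset.image_image]
        refine Finset.image_congr fun v hv => ?_
        simp only [Function.comp, if_pos (hgmem v (hesub hv))]
        rw [hleft v (hesub hv)]
      rw [this]
      exact hhom.2 e he
  · intro h hh
    obtain ⟨hmt, hhom⟩ := Finset.mem_filter.mp hh
    rw [mem_mapsTo] at hmt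
    beta_reduce
    refine Finset.mem_filter.mpr ⟨mem_mapsTo.mpr ⟨?_, ?_⟩, ?_, ?_⟩
    · intro v hv
      simp only [if_pos hv]
      exact hmt.1 _ (hgmem v hv)
    · intro v hv
      simp only [if_neg hv]
    · intro v hv
      simp only [if_pos hv]
      exact hhom.1 _ (hgmem v hv)
    · intro e he
      have hesub : e ⊆ H'.verts := (hH' e he).1
      have : e.image (fun v => if v ∈ H'.verts then h (g v) else 0)
          = (e.image g).image h := by
        rw [Finset.image_image]
        exact Finset.image_congr fun v hv => by
          simp only [Function.comp, if_pos (hesub hv)]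
      rw [this]
      refine hhom.2 (e.image g) ?_
      rw [hge]
      exact Finset.mem_image_of_mem _ he
  · intro φ hφ
    obtain ⟨hmt, hhom⟩ := Finset.mem_filter.mp hφ
    rw [mem_mapsTo] at hmt
    beta_reduce
    funext v
    by_cases hv : v ∈ H'.verts
    · simp only [if_pos hv, if_pos (hgmem v hv)]
      rw [hleft v hv]
    · simp only [if_neg hv]
      exact (hmt.2 v hv).symm
  · intro h hh
    obtain ⟨hmt, hhom⟩ := Finset.mem_filter.mp hh
    rw [mem_mapsTo] at hmt
    beta_reduce
    funext w
    by_cases hw : w ∈ H''.verts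
    · simp only [if_pos hw, if_pos (hginvmem w hw)]
      rw [hright w hw]
    · simp only [if_neg hw]
      exact (hmt.2 w hw).symm

end Iso

lemma pc_decomp {S : Finset ℕ} {q : ℕ → ℕ} (hq : q ∈ Parts S) :
    ∃ m : ℚ, 0 < m ∧ pc S q = (-1 : ℚ) ^ (S.card - (S.image q).card) * m := by
  refine ⟨∏ w ∈ S.image q,
    (Nat.factorial ((S.filter fun v => q v = w).card - 1) : ℚ), ?_, ?_⟩
  · refine Finset.prod_pos fun w _ => ?_
    exact_mod_cast Nat.factorial_pos _
  · rw [pc]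
    have hrw : ∀ w ∈ S.image q, pw ((S.filter fun v => q v = w).card)
        = (-1 : ℚ) ^ ((S.filter fun v => q v = w).card - 1)
          * (Nat.factorial ((S.filter fun v => q v = w).card - 1) : ℚ) := fun w _ => rfl
    rw [Finset.prod_congr rfl hrw, Finset.prod_mul_distrib, Finset.prod_pow_eq_pow_sum]
    have hsum : S.card = ∑ w ∈ S.image q, (S.filter fun v => q v = w).card :=
      Finset.card_eq_sum_card_image q S
    have hone : ∀ w ∈ S.image q, 1 ≤ (S.filter fun v => q v = w).card := by
      intro w hw
      obtain ⟨v, hv, rfl⟩ := Finset.mem_image.mp hw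
      exact Finset.card_pos.mpr ⟨v, Finset.mem_filter.mpr ⟨hv, rfl⟩⟩
    have h2 : ∀ w ∈ S.image q,
        (S.filter fun v => q v = w).card - 1 + 1 = (S.filter fun v => q v = w).card :=
      fun w hw => Nat.sub_add_cancel (hone w hw)
    have h3 : (∑ w ∈ S.image q, ((S.filter fun v => q v = w).card - 1))
        + (S.image q).card = S.card := by
      rw [hsum, ← Finset.sum_congr rfl h2, Finset.sum_add_distrib, Finset.sum_const,
        smul_eq_mul, mul_one]
    have hexp : (∑ w ∈ S.image q, ((S.filter fun v => q v = w).card - 1))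
        = S.card - (S.image q).card := by omega
    rw [hexp]

end Stmt19

theorem stmt19 (H : NatHypergraph) (hH : H.Good) :
    ∃ Q : Finset NatHypergraph,
      (∀ H' ∈ Q, IsQuotient H H') ∧
      (∀ H', IsQuotient H H' → ∃ H'' ∈ Q, Isomorphic H' H'') ∧
      (∀ H' ∈ Q, ∀ H'' ∈ Q, H' ≠ H'' → ¬ Isomorphic H' H'') ∧
      ∃ γ : NatHypergraph → ℚ, (∀ H' ∈ Q, γ H' ≠ 0) ∧
        ∀ G : NatHypergraph, G.Good →
          (subCount G H : ℚ) = ∑ H' ∈ Q, γ H' * (homCount G H' : ℚ) := by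
  classical
  set QF : Finset NatHypergraph := (Stmt19.Parts H.verts).image (quotientBy H) with hQF
  set key : NatHypergraph → ℕ := fun X => Encodable.encode (X.verts, X.edges) with hkey
  have keyinj : ∀ X Y : NatHypergraph, key X = key Y → X = Y := by
    intro X Y h
    have h2 : (X.verts, X.edges) = (Y.verts, Y.edges) := Encodable.encode_injective h
    cases X; cases Y
    simp only [Prod.mk.injEq] at h2
    simp [h2.1, h2.2]
  have hQFgood : ∀ X ∈ QF, X.Good := by
    intro X hX
    obtain ⟨q, _, rfl⟩ := Finset.mem_image.mp hX
    exact Stmt19.quotientBy_good hH q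
  set Q := QF.filter (fun X => ∀ Y ∈ QF, Isomorphic X Y → key X ≤ key Y) with hQdef
  have hQsub : Q ⊆ QF := Finset.filter_subset _ _
  have exists_rep : ∀ W ∈ QF, ∃ X ∈ Q, Isomorphic X W := by
    intro W hW
    have hWC : W ∈ QF.filter (fun Y => Isomorphic Y W) :=
      Finset.mem_filter.mpr ⟨hW, Stmt19.iso_refl W⟩
    obtain ⟨X, hXC, hXmin⟩ := Finset.exists_min_image
      (QF.filter (fun Y => Isomorphic Y W)) key ⟨W, hWC⟩
    obtain ⟨hXQF, hXW⟩ := Finset.mem_filter.mp hXC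
    have hXgood : X.Good := hQFgood X hXQF
    refine ⟨X, Finset.mem_filter.mpr ⟨hXQF, ?_⟩, hXW⟩
    intro Y hYQF hXY
    refine hXmin Y (Finset.mem_filter.mpr ⟨hYQF, ?_⟩)
    exact Stmt19.iso_trans (Stmt19.iso_symm hXgood hXY) hXW
  refine ⟨Q, ?_, ?_, ?_,
    fun X => (∑ q ∈ (Stmt19.Parts H.verts).filter
      (fun q => Isomorphic (quotientBy H q) X), Stmt19.pc H.verts q) / (autCount H : ℚ),
    ?_, ?_⟩
  · intro H' hH'
    obtain ⟨q, _, rfl⟩ := Finset.mem_image.mp (hQsub hH')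
    exact ⟨q, rfl⟩
  · rintro H' ⟨f, rfl⟩
    have hκ : quotientBy H (Stmt19.pker H.verts f) ∈ QF :=
      Finset.mem_image_of_mem _ (Stmt19.pker_mem_Parts H.verts f)
    obtain ⟨X, hXQ, hXiso⟩ := exists_rep _ hκ
    have hXgood : X.Good := hQFgood X (hQsub hXQ)
    refine ⟨X, hXQ, ?_⟩
    exact Stmt19.iso_symm hXgood (Stmt19.iso_trans hXiso (Stmt19.quot_iso_ker hH f))
  · intro X hX Y hY hne hiso
    obtain ⟨hXQF, hXprop⟩ := Finset.mem_filter.mp hX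
    obtain ⟨hYQF, hYprop⟩ := Finset.mem_filter.mp hY
    have hXgood : X.Good := hQFgood X hXQF
    have h1 : key X ≤ key Y := hXprop Y hYQF hiso
    have h2 : key Y ≤ key X := hYprop X hXQF (Stmt19.iso_symm hXgood hiso)
    exact hne (keyinj X Y (le_antisymm h1 h2))
  · -- γ nonzero
    intro X hX
    have hXQF : X ∈ QF := hQsub hX
    have hXgood : X.Good := hQFgood X hXQF
    have hautpos : (0 : ℚ) < (autCount H : ℚ) := by
      rw [Stmt19.autCount_eq]
      exact_mod_cast Stmt19.autF_pos H
    refine div_ne_zero ?_ (ne_of_gt hautpos)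
    -- the class is nonempty and all terms have the same sign
    obtain ⟨q0, hq0P, hq0⟩ := Finset.mem_image.mp hXQF
    have hq0mem : q0 ∈ (Stmt19.Parts H.verts).filter
        (fun q => Isomorphic (quotientBy H q) X) := by
      refine Finset.mem_filter.mpr ⟨hq0P, ?_⟩
      rw [hq0]
      exact Stmt19.iso_refl X
    have hsign : ∀ q ∈ (Stmt19.Parts H.verts).filter
        (fun q => Isomorphic (quotientBy H q) X),
        ∃ m : ℚ, 0 < m ∧ Stmt19.pc H.verts q
          = (-1 : ℚ) ^ (H.verts.card - X.verts.card) * m := by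
      intro q hq
      obtain ⟨hqP, hqiso⟩ := Finset.mem_filter.mp hq
      obtain ⟨m, hm, hpc⟩ := Stmt19.pc_decomp hqP
      have hcards : (H.verts.image q).card = X.verts.card :=
        Stmt19.iso_verts_card hqiso
      refine ⟨m, hm, ?_⟩
      rw [hpc, hcards]
    -- rewrite the sum
    set cls := (Stmt19.Parts H.verts).filter (fun q => Isomorphic (quotientBy H q) X)
      with hcls
    have hposs : 0 < ∑ q ∈ cls, ((-1 : ℚ) ^ (H.verts.card - X.verts.card))⁻¹
        * Stmt19.pc H.verts q := by
      refine Finset.sum_pos ?_ ⟨q0, hq0mem⟩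
      intro q hq
      obtain ⟨m, hm, hpc⟩ := hsign q hq
      rw [hpc]
      have hpow : ((-1 : ℚ) ^ (H.verts.card - X.verts.card)) ≠ 0 := by
        apply pow_ne_zero; norm_num
      rw [← mul_assoc, inv_mul_cancel₀ hpow, one_mul]
      exact hm
    intro hzero
    rw [← Finset.mul_sum] at hposs
    rw [hcls] at hzero
    rw [hzero, mul_zero] at hposs
    exact lt_irrefl 0 hposs
  · -- the counting identity
    intro G hG
    have hautpos : (0 : ℚ) < (autCount H : ℚ) := by
      rw [Stmt19.autCount_eq]
      exact_mod_cast Stmt19.autF_pos H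
    have hautne : (autCount H : ℚ) ≠ 0 := ne_of_gt hautpos
    have hsub : (subCount G H : ℚ) * (autCount H : ℚ)
        = (Stmt19.Nq G H (Stmt19.qdisc H) : ℚ) := by
      rw [Stmt19.subCount_eq, Stmt19.autCount_eq, Stmt19.sub_mul_aut hH G]
      push_cast
      ring
    have hmain : (Stmt19.Nq G H (Stmt19.qdisc H) : ℚ)
        = ∑ q ∈ Stmt19.Parts H.verts,
            Stmt19.pc H.verts q * (homCount G (quotientBy H q) : ℚ) :=
      Stmt19.inv_eq hH G
    have inner : ∀ q ∈ Stmt19.Parts H.verts,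
        (∑ X ∈ Q, if Isomorphic (quotientBy H q) X
          then Stmt19.pc H.verts q * (homCount G X : ℚ) else 0)
          = Stmt19.pc H.verts q * (homCount G (quotientBy H q) : ℚ) := by
      intro q hq
      have hquotQF : quotientBy H q ∈ QF := Finset.mem_image_of_mem _ hq
      obtain ⟨X0, hX0Q, hX0iso⟩ := exists_rep _ hquotQF
      have hgood : (quotientBy H q).Good := Stmt19.quotientBy_good hH q
      have hX0good : X0.Good := hQFgood X0 (hQsub hX0Q)
      rw [Finset.sum_eq_single_of_mem X0 hX0Q]
      · rw [if_pos (Stmt19.iso_symm hX0good hX0iso),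
          Stmt19.hom_iso hX0good G hX0iso]
      · intro Y hYQ hYne
        rw [if_neg]
        intro hisoY
        have h1 : Isomorphic Y (quotientBy H q) := Stmt19.iso_symm hgood hisoY
        have h2 : Isomorphic Y X0 :=
          Stmt19.iso_trans h1 (Stmt19.iso_symm hX0good hX0iso)
        have hYgood : Y.Good := hQFgood Y (hQsub hYQ)
        have hk1 : key Y ≤ key X0 :=
          (Finset.mem_filter.mp hYQ).2 X0 (hQsub hX0Q) h2
        have hk2 : key X0 ≤ key Y :=
          (Finset.mem_filter.mp hX0Q).2 Y (hQsub hYQ) (Stmt19.iso_symm hYgood h2)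
        exact hYne (keyinj Y X0 (le_antisymm hk1 hk2))
    have hgroup : (∑ q ∈ Stmt19.Parts H.verts,
        Stmt19.pc H.verts q * (homCount G (quotientBy H q) : ℚ))
        = ∑ X ∈ Q, (∑ q ∈ (Stmt19.Parts H.verts).filter
            (fun q => Isomorphic (quotientBy H q) X), Stmt19.pc H.verts q)
          * (homCount G X : ℚ) := by
      rw [← Finset.sum_congr rfl inner, Finset.sum_comm]
      refine Finset.sum_congr rfl fun X _ => ?_
      rw [Finset.sum_mul, Finset.sum_filter]
    have hfinal : (∑ X ∈ Q, ((∑ q ∈ (Stmt19.Parts H.verts).filter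
        (fun q => Isomorphic (quotientBy H q) X), Stmt19.pc H.verts q)
          / (autCount H : ℚ)) * (homCount G X : ℚ))
        = (Stmt19.Nq G H (Stmt19.qdisc H) : ℚ) / (autCount H : ℚ) := by
      rw [hmain, hgroup, Finset.sum_div]
      refine Finset.sum_congr rfl fun X _ => ?_
      ring
    rw [hfinal, ← hsub, mul_div_assoc, div_self hautne, mul_one]

end
end
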